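/- arXiv:1908.08901 — 6 statements merged into one kernel-verified Lean document; each statement's English description precedes it below -/
import Mathlib

section
/- Let D ⊂ ℝ² be a bounded measurable set and let T_1, …, T_N be pairwise disjoint measurable subsets of D whose union equals D up to a Lebesgue-null set, such that each T_i is (up to a null set) the convex hull of three affinely independent points whose pairwise Euclidean distances are at most h ∈ (0,1], so in particular 0 < |T_i| < ∞. Let Z_1, …, Z_N be an independent family of random variables with Z_i uniformly distributed on T_i. Then for every v ∈ L²(D) it holds that E[|∫_D v(x) dx − ∑_{i=1}^N |T_i| v(Z_i)|²] ≤ (√3/2) h² ‖v‖²_{L²(D)}. -/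
open MeasureTheory ProbabilityTheory
open Set
open scoped ENNReal


local notation "F" => (Fin 2 → ℝ)

lemma stdTri_vol_le : volume {x : F | 0 ≤ x 0 ∧ 0 ≤ x 1 ∧ x 0 + x 1 ≤ 1} ≤ 1/2 := by
  set Δ : Set F := {x : F | 0 ≤ x 0 ∧ 0 ≤ x 1 ∧ x 0 + x 1 ≤ 1} with hΔ
  have hΔm : MeasurableSet Δ := by
    apply MeasurableSet.inter
    · exact measurableSet_le measurable_const (measurable_pi_apply 0)
    apply MeasurableSet.inter
    · exact measurableSet_le measurable_const (measurable_pi_apply 1)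
    · exact measurableSet_le ((measurable_pi_apply 0).add (measurable_pi_apply 1)) measurable_const
  set c : F := fun _ => (1:ℝ) with hc
  set Δ' : Set F := (fun x => c - x) ⁻¹' Δ with hΔ'
  have hΔ'm : MeasurableSet Δ' := hΔm.preimage (measurable_const.sub measurable_id)
  have hvolΔ' : volume Δ' = volume Δ := by
    have h1 : Δ' = (fun x : F => -x) ⁻¹' ((fun x : F => c + x) ⁻¹' Δ) := by
      ext x; simp [hΔ', sub_eq_add_neg]
    rw [h1]
    have hneg : ((fun x : F => -x) ⁻¹' ((fun x : F => c + x) ⁻¹' Δ))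
        = (Matrix.toLin' (-1 : Matrix (Fin 2) (Fin 2) ℝ)) ⁻¹' ((fun x : F => c + x) ⁻¹' Δ) := by
      congr 1
      ext x
      simp [Matrix.toLin'_apply, Matrix.neg_mulVec]
    rw [hneg, Measure.addHaar_preimage_linearMap]
    · rw [LinearMap.det_toLin', Matrix.det_neg]
      simp [measure_preimage_add]
    · rw [LinearMap.det_toLin', Matrix.det_neg]; simp
  have hcube : volume (Set.pi (univ : Set (Fin 2)) fun _ => Icc (0:ℝ) 1) = 1 := by
    rw [volume_pi_pi]
    simp [Real.volume_Icc]
  have hunion : Δ ∪ Δ' ⊆ Set.pi univ fun _ => Icc (0:ℝ) 1 := by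
    rintro x (⟨h1, h2, h3⟩ | hx)
    · have : ∀ i : Fin 2, x i ∈ Icc (0:ℝ) 1 := by
        rw [Fin.forall_fin_two]
        exact ⟨⟨h1, by linarith⟩, ⟨h2, by linarith⟩⟩
      exact fun i _ => this i
    · obtain ⟨h1, h2, h3⟩ := hx
      simp only [hc, Pi.sub_apply] at h1 h2 h3
      have : ∀ i : Fin 2, x i ∈ Icc (0:ℝ) 1 := by
        rw [Fin.forall_fin_two]
        exact ⟨⟨by linarith, by linarith⟩, ⟨by linarith, by linarith⟩⟩
      exact fun i _ => this i
  have hinter : Δ ∩ Δ' ⊆ {x : F | x 0 + x 1 = 1} := by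
    rintro x ⟨hx, hx'⟩
    obtain ⟨h1, h2, h3⟩ := hx
    obtain ⟨h1', h2', h3'⟩ := hx'
    simp only [hc, Pi.sub_apply] at h1' h2' h3'
    have : 1 ≤ x 0 + x 1 := by linarith
    exact le_antisymm h3 this
  have hplane : volume {x : F | x 0 + x 1 = 1} = 0 := by
    set ψ : F →ₗ[ℝ] ℝ := (LinearMap.proj (0 : Fin 2) : ((_ : Fin 2) → ℝ) →ₗ[ℝ] ℝ) + LinearMap.proj (1 : Fin 2) with hψ
    set p : F := fun i => if i = 0 then (1:ℝ) else 0 with hp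
    have hψx : ∀ y : F, ψ y = y 0 + y 1 := fun y => rfl
    have key : ∀ x : F, ψ (x -ᵥ p) = x 0 + x 1 - 1 := by
      intro x
      rw [vsub_eq_sub, hψx]
      simp [hp]
      ring
    have : {x : F | x 0 + x 1 = 1} =
        (AffineSubspace.mk' p (LinearMap.ker ψ) : Set F) := by
      ext x
      simp only [Set.mem_setOf_eq, SetLike.mem_coe, AffineSubspace.mem_mk',
        LinearMap.mem_ker, key, sub_eq_zero]
    rw [this]
    apply Measure.addHaar_affineSubspace
    intro hT
    have h0 : (0 : F) ∈ AffineSubspace.mk' p (LinearMap.ker ψ) := hT ▸ trivial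
    rw [AffineSubspace.mem_mk', LinearMap.mem_ker, key] at h0
    norm_num at h0
  -- combine
  have key : volume Δ + volume Δ ≤ 1 := by
    calc volume Δ + volume Δ = volume Δ + volume Δ' := by rw [hvolΔ']
    _ = volume (Δ ∪ Δ') + volume (Δ ∩ Δ') := (measure_union_add_inter Δ hΔ'm).symm
    _ ≤ volume (Set.pi univ fun _ => Icc (0:ℝ) 1) + volume {x : F | x 0 + x 1 = 1} := by
        exact add_le_add (measure_mono hunion) (measure_mono hinter)
    _ = 1 := by rw [hcube, hplane, add_zero]
  have : 2 * volume Δ ≤ 1 := by rwa [two_mul]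
  rw [ENNReal.le_div_iff_mul_le (by norm_num) (by norm_num)]
  rwa [mul_comm]

lemma tri_vol_F (h : ℝ) (hh0 : 0 ≤ h) (A B C : F)
    (hAB : (B 0 - A 0)^2 + (B 1 - A 1)^2 ≤ h^2)
    (hAC : (C 0 - A 0)^2 + (C 1 - A 1)^2 ≤ h^2) :
    volume (convexHull ℝ ({A, B, C} : Set F)) ≤ ENNReal.ofReal (h^2 / 2) := by
  set Δ : Set F := {x : F | 0 ≤ x 0 ∧ 0 ≤ x 1 ∧ x 0 + x 1 ≤ 1} with hΔdef
  set u : F := B - A with hu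
  set w : F := C - A with hw
  set M : Matrix (Fin 2) (Fin 2) ℝ := !![u 0, w 0; u 1, w 1] with hM
  set L : F →ₗ[ℝ] F := Matrix.toLin' M with hL
  have hLapp : ∀ x : F, L x = x 0 • u + x 1 • w := by
    intro x
    funext i
    fin_cases i <;>
      simp [hL, hM, Matrix.toLin'_apply, Matrix.mulVec, dotProduct,
        Fin.sum_univ_two, mul_comm]
  have hΔconv : Convex ℝ Δ := by
    intro x hx y hy a b ha hb hab
    obtain ⟨hx1, hx2, hx3⟩ := hx
    obtain ⟨hy1, hy2, hy3⟩ := hy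
    refine ⟨?_, ?_, ?_⟩ <;> simp only [Pi.add_apply, Pi.smul_apply, smul_eq_mul] <;> nlinarith
  have hsub : convexHull ℝ ({A, B, C} : Set F) ⊆ (fun x => A + L x) '' Δ := by
    apply convexHull_min
    · rintro x (rfl | rfl | rfl)
      · exact ⟨0, ⟨le_refl _, le_refl _, by norm_num⟩, by simp [hLapp]⟩
      · refine ⟨fun i => if i = 0 then 1 else 0, ⟨by norm_num, by norm_num, by norm_num⟩, ?_⟩
        simp [hLapp, hu]
      · refine ⟨fun i => if i = 0 then 0 else 1, ⟨by norm_num, by norm_num, by norm_num⟩, ?_⟩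
        simp [hLapp, hw]
    · have : (fun x => A + L x) '' Δ = (fun y => A + y) '' (L '' Δ) := by
        rw [Set.image_image]
      rw [this]
      exact (hΔconv.linear_image L).translate A
  have himg : volume ((fun x => A + L x) '' Δ) ≤ ENNReal.ofReal (h^2/2) := by
    have h1 : (fun x => A + L x) '' Δ = (fun y => A + y) '' (L '' Δ) := by
      rw [Set.image_image]
    have h2 : (fun y : F => A + y) '' (L '' Δ) = (fun y : F => -A + y) ⁻¹' (L '' Δ) := by
      ext y
      constructor
      · rintro ⟨z, hz, rfl⟩; simpa using hz
      · intro hy; exact ⟨-A + y, hy, by simp⟩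
    rw [h1, h2, measure_preimage_add]
    rw [Measure.addHaar_image_linearMap]
    have hdet : |LinearMap.det L| ≤ h^2 := by
      rw [hL, LinearMap.det_toLin', hM, Matrix.det_fin_two_of]
      have h1 : u 0 = B 0 - A 0 := rfl
      have h2 : u 1 = B 1 - A 1 := rfl
      have h3 : w 0 = C 0 - A 0 := rfl
      have h4 : w 1 = C 1 - A 1 := rfl
      apply abs_le_of_sq_le_sq _ (sq_nonneg h)
      have hu2 : u 0 ^ 2 + u 1 ^ 2 ≤ h ^ 2 := by rw [h1, h2]; exact hAB
      have hw2 : w 0 ^ 2 + w 1 ^ 2 ≤ h ^ 2 := by rw [h3, h4]; exact hAC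
      have hun : (0:ℝ) ≤ u 0 ^ 2 + u 1 ^ 2 := by positivity
      have hwn : (0:ℝ) ≤ w 0 ^ 2 + w 1 ^ 2 := by positivity
      nlinarith [sq_nonneg (u 0 * w 0 + u 1 * w 1),
        mul_le_mul hu2 hw2 hwn (le_trans hun hu2)]
    calc ENNReal.ofReal |LinearMap.det L| * volume Δ
        ≤ ENNReal.ofReal (h^2) * (1/2) :=
          mul_le_mul' (ENNReal.ofReal_le_ofReal hdet) stdTri_vol_le
      _ = ENNReal.ofReal (h^2/2) := by
          have : (1/2 : ℝ≥0∞) = ENNReal.ofReal (1/2) := by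
            rw [ENNReal.ofReal_div_of_pos] <;> norm_num
          rw [this, ← ENNReal.ofReal_mul (by positivity)]
          ring_nf
  exact le_trans (measure_mono hsub) himg

lemma tri_vol_E (h : ℝ) (hh0 : 0 ≤ h) (A B C : EuclideanSpace ℝ (Fin 2))
    (hAB : dist A B ≤ h) (hAC : dist A C ≤ h) :
    volume (convexHull ℝ ({A, B, C} : Set (EuclideanSpace ℝ (Fin 2))))
      ≤ ENNReal.ofReal (h^2 / 2) := by
  set e := (MeasurableEquiv.toLp 2 (Fin 2 → ℝ)).symm with he
  set eL := WithLp.linearEquiv 2 ℝ (Fin 2 → ℝ) with heL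
  have happ : ∀ (x : EuclideanSpace ℝ (Fin 2)) (i : Fin 2), eL x i = x i := fun _ _ => rfl
  have hcoords : ∀ (x y : EuclideanSpace ℝ (Fin 2)), dist x y ≤ h →
      (eL y 0 - eL x 0)^2 + (eL y 1 - eL x 1)^2 ≤ h^2 := by
    intro x y hxy
    have hd : dist x y = Real.sqrt (∑ i, dist (x i) (y i) ^ 2) := EuclideanSpace.dist_eq x y
    have hsum : (0:ℝ) ≤ ∑ i, dist (x i) (y i) ^ 2 :=
      Finset.sum_nonneg fun i _ => sq_nonneg _
    have : ∑ i, dist (x i) (y i) ^ 2 ≤ h ^ 2 := by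
      have := Real.sq_sqrt hsum
      nlinarith [Real.sqrt_nonneg (∑ i, dist (x i) (y i) ^ 2), hd ▸ hxy]
    rw [Fin.sum_univ_two] at this
    have e0 : dist (x 0) (y 0) ^ 2 = (eL y 0 - eL x 0)^2 := by
      rw [Real.dist_eq, sq_abs, happ, happ]; ring
    have e1 : dist (x 1) (y 1) ^ 2 = (eL y 1 - eL x 1)^2 := by
      rw [Real.dist_eq, sq_abs, happ, happ]; ring
    rw [e0, e1] at this
    exact this
  have himage : (⇑eL) '' (convexHull ℝ ({A, B, C} : Set (EuclideanSpace ℝ (Fin 2))))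
      = convexHull ℝ ({eL A, eL B, eL C} : Set (Fin 2 → ℝ)) := by
    have := LinearMap.image_convexHull (eL.toLinearMap) ({A, B, C} : Set (EuclideanSpace ℝ (Fin 2)))
    rw [show ⇑eL = ⇑eL.toLinearMap from rfl, this]
    congr 1
    simp [Set.image_insert_eq]
  have hpre : (convexHull ℝ ({A, B, C} : Set (EuclideanSpace ℝ (Fin 2))))
      = ⇑e ⁻¹' (convexHull ℝ ({eL A, eL B, eL C} : Set (Fin 2 → ℝ))) := by
    rw [← himage]
    ext x
    constructor
    · intro hx
      exact Set.mem_image_of_mem _ hx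
    · rintro ⟨z, hz, hzx⟩
      have : z = x := WithLp.ofLp_injective 2 hzx
      rwa [← this]
  rw [hpre]
  rw [(EuclideanSpace.volume_preserving_symm_measurableEquiv_toLp (Fin 2)).measure_preimage]
  · exact tri_vol_F h hh0 (eL A) (eL B) (eL C) (hcoords A B hAB) (hcoords A C hAC)
  · exact ((Set.finite_singleton _).insert _ |>.insert _).isCompact_convexHull (𝕜 := ℝ)
      |>.measurableSet.nullMeasurableSet


theorem main_aux
    {Ω : Type*} [MeasurableSpace Ω] (P : Measure Ω) [IsProbabilityMeasure P]
    (D : Set (EuclideanSpace ℝ (Fin 2))) (hDmeas : MeasurableSet D)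
    (hDbdd : Bornology.IsBounded D)
    (h : ℝ) (hh0 : 0 < h) (hh1 : h ≤ 1)
    (N : ℕ) (T : Fin N → Set (EuclideanSpace ℝ (Fin 2)))
    (hTmeas : ∀ i, MeasurableSet (T i))
    (hTsub : ∀ i, T i ⊆ D)
    (hTdisj : Pairwise (Function.onFun Disjoint T))
    (hTtri : ∀ i, ∃ A B C : EuclideanSpace ℝ (Fin 2),
      AffineIndependent ℝ ![A, B, C] ∧
      dist A B ≤ h ∧ dist A C ≤ h ∧ dist B C ≤ h ∧
      volume (symmDiff (T i) (convexHull ℝ {A, B, C})) = 0)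
    (hTpos : ∀ i, 0 < volume (T i))
    (hTfin : ∀ i, volume (T i) < ⊤)
    (hcover : volume (D \ ⋃ i, T i) = 0)
    (Z : Fin N → Ω → EuclideanSpace ℝ (Fin 2))
    (hZmeas : ∀ i, Measurable (Z i))
    (hZlaw : ∀ i, Measure.map (Z i) P = (volume (T i))⁻¹ • volume.restrict (T i))
    (hZindep : iIndepFun Z P)
    (w : EuclideanSpace ℝ (Fin 2) → ℝ)
    (hwm : StronglyMeasurable w)
    (hw : MemLp w 2 (volume.restrict D)) :
    ∫ ω, |(∫ x in D, w x) - ∑ i, (volume (T i)).toReal * w (Z i ω)| ^ 2 ∂P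
      ≤ Real.sqrt 3 / 2 * h ^ 2 * ∫ x in D, w x ^ 2 := by
  haveI : IsFiniteMeasure (volume.restrict D) :=
    ⟨by rw [Measure.restrict_apply_univ]; exact hDbdd.measure_lt_top⟩
  set a : Fin N → ℝ := fun i => (volume (T i)).toReal with ha
  have ha_pos : ∀ i, 0 < a i := fun i =>
    ENNReal.toReal_pos (hTpos i).ne' (hTfin i).ne
  have hres : ∀ i, volume.restrict (T i) ≤ volume.restrict D := fun i =>
    Measure.restrict_mono (hTsub i) le_rfl
  -- membership in L² for w ∘ Z i
  have hw_Ti : ∀ i, MemLp w 2 (volume.restrict (T i)) := fun i =>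
    hw.mono_measure (hres i)
  have hw_map : ∀ i, MemLp w 2 (Measure.map (Z i) P) := by
    intro i
    rw [hZlaw i]
    exact (hw_Ti i).smul_measure (ENNReal.inv_ne_top.mpr (hTpos i).ne')
  have hwZ : ∀ i, MemLp (fun ω => w (Z i ω)) 2 P := by
    intro i
    have := (memLp_map_measure_iff hwm.aestronglyMeasurable
      (hZmeas i).aemeasurable).mp (hw_map i)
    exact this
  set X : Fin N → Ω → ℝ := fun i ω => a i * w (Z i ω) with hX
  have hXmem : ∀ i, MemLp (X i) 2 P := fun i => (hwZ i).const_mul (a i)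
  -- expectations
  have hmoment1 : ∀ i, ∫ ω, w (Z i ω) ∂P = (a i)⁻¹ * ∫ x in T i, w x := by
    intro i
    rw [← integral_map (hZmeas i).aemeasurable hwm.aestronglyMeasurable,
      hZlaw i, integral_smul_measure, ENNReal.toReal_inv, smul_eq_mul]
  have hmoment2 : ∀ i, ∫ ω, w (Z i ω) ^ 2 ∂P = (a i)⁻¹ * ∫ x in T i, w x ^ 2 := by
    intro i
    have hsm : StronglyMeasurable fun x => w x ^ 2 := hwm.pow 2
    rw [← integral_map (hZmeas i).aemeasurable hsm.aestronglyMeasurable,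
      hZlaw i, integral_smul_measure, ENNReal.toReal_inv, smul_eq_mul]
  -- integrability on D and the T i
  have hInt : IntegrableOn w D := hw.integrable one_le_two
  have hIntSq : IntegrableOn (fun x => w x ^ 2) D := hw.integrable_sq
  have hDU : D =ᵐ[volume] ⋃ i, T i := by
    rw [Filter.eventuallyEq_set]
    have h2 : volume ((⋃ i, T i) \ D) = 0 := by
      rw [Set.diff_eq_empty.mpr (Set.iUnion_subset hTsub)]
      exact measure_empty
    have h12 := measure_union_null hcover h2
    filter_upwards [measure_eq_zero_iff_ae_notMem.mp h12] with x hx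
    simp only [Set.mem_union, Set.mem_diff] at hx
    push_neg at hx
    constructor
    · intro hxD; exact hx.1 hxD
    · intro hxU; exact hx.2 hxU
  have hrestr : volume.restrict D = volume.restrict (⋃ i, T i) :=
    Measure.restrict_congr_set hDU
  have hsum1 : ∑ i, ∫ x in T i, w x = ∫ x in D, w x := by
    rw [hrestr, integral_iUnion hTmeas hTdisj (hInt.mono_set (Set.iUnion_subset hTsub)),
      tsum_fintype]
  have hsum2 : ∑ i, ∫ x in T i, w x ^ 2 = ∫ x in D, w x ^ 2 := by
    rw [hrestr, integral_iUnion hTmeas hTdisj (hIntSq.mono_set (Set.iUnion_subset hTsub)),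
      tsum_fintype]
  set S : Ω → ℝ := ∑ i, X i with hS
  have hSmem : MemLp S 2 P := memLp_finsetSum' _ (fun i _ => hXmem i)
  have hSapp : ∀ ω, S ω = ∑ i, a i * w (Z i ω) := by
    intro ω
    rw [hS, Finset.sum_apply]
  have hXint : ∀ i, Integrable (X i) P := fun i => (hXmem i).integrable one_le_two
  have hXi_int : ∀ i, ∫ ω, X i ω ∂P = ∫ x in T i, w x := by
    intro i
    have : ∫ ω, X i ω ∂P = a i * ∫ ω, w (Z i ω) ∂P := by
      simp only [hX]
      rw [integral_const_mul]
    rw [this, hmoment1 i, ← mul_assoc, mul_inv_cancel₀ (ha_pos i).ne', one_mul]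
  have hES : ∫ ω, S ω ∂P = ∫ x in D, w x := by
    have h1 : ∫ ω, S ω ∂P = ∑ i, ∫ ω, X i ω ∂P := by
      simp only [hS, Finset.sum_apply]
      exact integral_finset_sum _ (fun i _ => hXint i)
    rw [h1]
    rw [Finset.sum_congr rfl fun i _ => hXi_int i]
    exact hsum1
  -- pairwise independence of the X i
  have hXindep : Set.Pairwise ↑(Finset.univ : Finset (Fin N))
      fun i j => IndepFun (X i) (X j) P := by
    intro i _ j _ hij
    have hZij := hZindep.indepFun hij
    have hfi : Measurable fun x : EuclideanSpace ℝ (Fin 2) => a i * w x :=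
      hwm.measurable.const_mul (a i)
    have hfj : Measurable fun x : EuclideanSpace ℝ (Fin 2) => a j * w x :=
      hwm.measurable.const_mul (a j)
    exact hZij.comp hfi hfj
  have hvar : variance S P = ∑ i, variance (X i) P := by
    rw [hS]
    exact IndepFun.variance_sum (fun i _ => hXmem i) hXindep
  -- bound each variance
  have hvb : ∀ i, variance (X i) P ≤ a i * ∫ x in T i, w x ^ 2 := by
    intro i
    have h1 := variance_le_expectation_sq (X := X i) (hXmem i).aestronglyMeasurable
    have h2 : P[(X i)^2] = a i * ∫ x in T i, w x ^ 2 := by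
      have hfun : ((X i)^2 : Ω → ℝ) = fun ω => (a i)^2 * w (Z i ω)^2 := by
        funext ω
        simp [hX, mul_pow]
      rw [hfun, integral_const_mul, hmoment2 i, ← mul_assoc]
      congr 1
      rw [sq, mul_assoc, mul_inv_cancel₀ (ha_pos i).ne', mul_one]
    rw [h2] at h1
    exact h1
  -- geometric bound on the areas
  have hTvol : ∀ i, a i ≤ Real.sqrt 3 / 2 * h^2 := by
    intro i
    obtain ⟨A, B, C, _, hAB, hAC, _, hsd⟩ := hTtri i
    have hcong : volume (T i) = volume (convexHull ℝ ({A,B,C} : Set (EuclideanSpace ℝ (Fin 2)))) :=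
      measure_congr ((measure_symmDiff_eq_zero_iff).mp hsd)
    have hle : volume (T i) ≤ ENNReal.ofReal (h^2/2) := by
      rw [hcong]
      exact tri_vol_E h hh0.le A B C hAB hAC
    have h12 : a i ≤ h^2/2 := by
      have := ENNReal.toReal_mono ENNReal.ofReal_ne_top hle
      rwa [ENNReal.toReal_ofReal (by positivity)] at this
    have hs3 : (1:ℝ) ≤ Real.sqrt 3 := by
      rw [show (1:ℝ) = Real.sqrt 1 from (Real.sqrt_one).symm]
      exact Real.sqrt_le_sqrt (by norm_num)
    nlinarith [sq_nonneg h]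
  -- final chain
  have hmain : ∫ ω, |(∫ x in D, w x) - ∑ i, a i * w (Z i ω)| ^ 2 ∂P = variance S P := by
    have h1 := variance_eq_integral hSmem.aemeasurable
    rw [h1]
    apply integral_congr_ae
    apply Filter.Eventually.of_forall
    intro ω
    dsimp only
    rw [hSapp ω, hES, sq_abs]
    ring
  rw [hmain, hvar]
  calc ∑ i, variance (X i) P
      ≤ ∑ i, a i * ∫ x in T i, w x ^ 2 := Finset.sum_le_sum (fun i _ => hvb i)
    _ ≤ ∑ i, (Real.sqrt 3 / 2 * h^2) * ∫ x in T i, w x ^ 2 :=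
        Finset.sum_le_sum (fun i _ =>
          mul_le_mul_of_nonneg_right (hTvol i) (integral_nonneg fun x => sq_nonneg _))
    _ = (Real.sqrt 3 / 2 * h^2) * ∑ i, ∫ x in T i, w x ^ 2 := by rw [Finset.mul_sum]
    _ = Real.sqrt 3 / 2 * h ^ 2 * ∫ x in D, w x ^ 2 := by rw [hsum2]


/-- Mean-square error bound for the stratified Monte Carlo quadrature rule on a
triangulation with maximal edge length `h`:
`E[|∫_D v − ∑ i |T i| v (Z i)|²] ≤ (√3/2) h² ‖v‖²_{L²(D)}`. -/
theorem stmt_4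
    {Ω : Type*} [MeasurableSpace Ω] (P : Measure Ω) [IsProbabilityMeasure P]
    (D : Set (EuclideanSpace ℝ (Fin 2))) (hDmeas : MeasurableSet D)
    (hDbdd : Bornology.IsBounded D)
    (h : ℝ) (hh0 : 0 < h) (hh1 : h ≤ 1)
    (N : ℕ) (T : Fin N → Set (EuclideanSpace ℝ (Fin 2)))
    (hTmeas : ∀ i, MeasurableSet (T i))
    (hTsub : ∀ i, T i ⊆ D)
    (hTdisj : Pairwise (Function.onFun Disjoint T))
    (hTtri : ∀ i, ∃ A B C : EuclideanSpace ℝ (Fin 2),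
      AffineIndependent ℝ ![A, B, C] ∧
      dist A B ≤ h ∧ dist A C ≤ h ∧ dist B C ≤ h ∧
      volume (symmDiff (T i) (convexHull ℝ {A, B, C})) = 0)
    (hTpos : ∀ i, 0 < volume (T i))
    (hTfin : ∀ i, volume (T i) < ⊤)
    (hcover : volume (D \ ⋃ i, T i) = 0)
    (Z : Fin N → Ω → EuclideanSpace ℝ (Fin 2))
    (hZmeas : ∀ i, Measurable (Z i))
    (hZlaw : ∀ i, Measure.map (Z i) P = (volume (T i))⁻¹ • volume.restrict (T i))
    (hZindep : iIndepFun Z P)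
    (v : EuclideanSpace ℝ (Fin 2) → ℝ)
    (hv : MemLp v 2 (volume.restrict D)) :
    ∫ ω, |(∫ x in D, v x) - ∑ i, (volume (T i)).toReal * v (Z i ω)| ^ 2 ∂P
      ≤ Real.sqrt 3 / 2 * h ^ 2 * ∫ x in D, |v x| ^ 2 := by
  set w : EuclideanSpace ℝ (Fin 2) → ℝ := hv.1.mk v with hwdef
  have hwm : StronglyMeasurable w := hv.1.stronglyMeasurable_mk
  have hvw : v =ᵐ[volume.restrict D] w := hv.1.ae_eq_mk
  have hw : MemLp w 2 (volume.restrict D) := hv.ae_eq hvw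
  have hvwi : ∀ i, v =ᵐ[volume.restrict (T i)] w := fun i =>
    hvw.filter_mono (ae_mono (Measure.restrict_mono (hTsub i) le_rfl))
  have hZae : ∀ i : Fin N, (fun ω => v (Z i ω)) =ᵐ[P] fun ω => w (Z i ω) := by
    intro i
    apply ae_eq_comp (hZmeas i).aemeasurable
    rw [hZlaw i]
    exact Measure.ae_smul_measure (hvwi i) _
  have hallae : ∀ᵐ ω ∂P, ∀ i, v (Z i ω) = w (Z i ω) := ae_all_iff.2 hZae
  have hIv : ∫ x in D, v x = ∫ x in D, w x := integral_congr_ae hvw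
  have hIv2 : ∫ x in D, |v x| ^ 2 = ∫ x in D, w x ^ 2 :=
    integral_congr_ae (hvw.mono fun x hx => by dsimp only; rw [hx, sq_abs])
  have hLHS : ∫ ω, |(∫ x in D, v x) - ∑ i, (volume (T i)).toReal * v (Z i ω)| ^ 2 ∂P
      = ∫ ω, |(∫ x in D, w x) - ∑ i, (volume (T i)).toReal * w (Z i ω)| ^ 2 ∂P := by
    apply integral_congr_ae
    filter_upwards [hallae] with ω hω
    have hsum : ∑ i, (volume (T i)).toReal * v (Z i ω)
        = ∑ i, (volume (T i)).toReal * w (Z i ω) :=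
      Finset.sum_congr rfl fun i _ => by rw [hω i]
    rw [hIv, hsum]
  rw [hLHS, hIv2]
  exact main_aux P D hDmeas hDbdd h hh0 hh1 N T hTmeas hTsub hTdisj hTtri hTpos hTfin
    hcover Z hZmeas hZlaw hZindep w hwm hw
end

section
/- Let D ⊂ ℝ² be a bounded measurable set and let T_1, …, T_N be pairwise disjoint measurable subsets of D, each of finite positive Lebesgue measure and of diameter at most h ∈ (0,1], whose union equals D up to a Lebesgue-null set. Let Z_1, …, Z_N be an independent family of random variables with Z_i uniformly distributed on T_i. Then for every s ∈ (0,1) and every v ∈ L²(D) with finite Sobolev–Slobodeckij seminorm |v|_{W^{s,2}(D)}, it holds that E[|∫_D v(x) dx − ∑_{i=1}^N |T_i| v(Z_i)|²] ≤ h^{2+2s} |v|²_{W^{s,2}(D)}. -/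
open MeasureTheory ProbabilityTheory

/-- Mean-square error bound for the stratified Monte Carlo quadrature rule for
integrands of fractional Sobolev regularity `W^{s,2}(D)`, `s ∈ (0,1)`:
`E[|∫_D v − ∑ i |T i| v (Z i)|²] ≤ h^{2+2s} |v|²_{W^{s,2}(D)}`. -/
theorem stmt_5
    {Ω : Type*} [MeasurableSpace Ω] (P : Measure Ω) [IsProbabilityMeasure P]
    (D : Set (EuclideanSpace ℝ (Fin 2))) (hDmeas : MeasurableSet D)
    (hDbdd : Bornology.IsBounded D)
    (h : ℝ) (hh0 : 0 < h) (hh1 : h ≤ 1)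
    (N : ℕ) (T : Fin N → Set (EuclideanSpace ℝ (Fin 2)))
    (hTmeas : ∀ i, MeasurableSet (T i))
    (hTsub : ∀ i, T i ⊆ D)
    (hTdisj : Pairwise (Function.onFun Disjoint T))
    (hTpos : ∀ i, 0 < volume (T i))
    (hTfin : ∀ i, volume (T i) < ⊤)
    (hTdiam : ∀ i, ∀ x ∈ T i, ∀ z ∈ T i, dist x z ≤ h)
    (hcover : volume (D \ ⋃ i, T i) = 0)
    (Z : Fin N → Ω → EuclideanSpace ℝ (Fin 2))
    (hZmeas : ∀ i, Measurable (Z i))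
    (hZlaw : ∀ i, Measure.map (Z i) P = (volume (T i))⁻¹ • volume.restrict (T i))
    (hZindep : iIndepFun Z P)
    (s : ℝ) (hs0 : 0 < s) (hs1 : s < 1)
    (v : EuclideanSpace ℝ (Fin 2) → ℝ)
    (hv : MemLp v 2 (volume.restrict D))
    (hsem : Integrable
      (fun p : EuclideanSpace ℝ (Fin 2) × EuclideanSpace ℝ (Fin 2) =>
        |v p.1 - v p.2| ^ 2 / dist p.1 p.2 ^ (2 + 2 * s))
      ((volume.restrict D).prod (volume.restrict D))) :
    ∫ ω, |(∫ x in D, v x) - ∑ i, (volume (T i)).toReal * v (Z i ω)| ^ 2 ∂P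
      ≤ h ^ (2 + 2 * s)
          * ∫ x in D, ∫ z in D, |v x - v z| ^ 2 / dist x z ^ (2 + 2 * s) := by
  classical
  have hq0 : (0:ℝ) < 2 + 2 * s := by linarith
  have hDfin : volume D < ⊤ := hDbdd.measure_lt_top
  haveI : IsFiniteMeasure (volume.restrict D) :=
    ⟨by rwa [Measure.restrict_apply_univ]⟩
  haveI : ∀ i, IsFiniteMeasure (volume.restrict (T i)) := fun i =>
    ⟨by rw [Measure.restrict_apply_univ]; exact hTfin i⟩
  -- measurable representative of `v`
  obtain ⟨g, hgsm, hvg⟩ : ∃ g : EuclideanSpace ℝ (Fin 2) → ℝ,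
      StronglyMeasurable g ∧ v =ᵐ[volume.restrict D] g :=
    ⟨hv.1.mk v, hv.1.stronglyMeasurable_mk, hv.1.ae_eq_mk⟩
  have hgmeas : Measurable g := hgsm.measurable
  have hg2 : MemLp g 2 (volume.restrict D) := hv.ae_eq hvg
  set Rg := fun p : EuclideanSpace ℝ (Fin 2) × EuclideanSpace ℝ (Fin 2) =>
    |g p.1 - g p.2| ^ 2 / dist p.1 p.2 ^ (2 + 2 * s) with hRgdef
  -- the two "ratio" integrands agree a.e. on the product
  have hRae : (fun p : EuclideanSpace ℝ (Fin 2) × EuclideanSpace ℝ (Fin 2) =>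
      |v p.1 - v p.2| ^ 2 / dist p.1 p.2 ^ (2 + 2 * s))
        =ᵐ[(volume.restrict D).prod (volume.restrict D)] Rg := by
    set B := toMeasurable (volume.restrict D) {x | ¬ v x = g x} with hBdef
    have hBnull : volume.restrict D B = 0 := by
      rw [hBdef, measure_toMeasurable]
      exact hvg
    have h1 : ((volume.restrict D).prod (volume.restrict D))
        {p : EuclideanSpace ℝ (Fin 2) × EuclideanSpace ℝ (Fin 2) | p.1 ∈ B} = 0 := by
      have hset : {p : EuclideanSpace ℝ (Fin 2) × EuclideanSpace ℝ (Fin 2) | p.1 ∈ B}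
          = B ×ˢ (Set.univ : Set (EuclideanSpace ℝ (Fin 2))) := by
        ext p; simp [Set.mem_prod]
      rw [hset, Measure.prod_prod, hBnull, zero_mul]
    have h2 : ((volume.restrict D).prod (volume.restrict D))
        {p : EuclideanSpace ℝ (Fin 2) × EuclideanSpace ℝ (Fin 2) | p.2 ∈ B} = 0 := by
      have hset : {p : EuclideanSpace ℝ (Fin 2) × EuclideanSpace ℝ (Fin 2) | p.2 ∈ B}
          = (Set.univ : Set (EuclideanSpace ℝ (Fin 2))) ×ˢ B := by
        ext p; simp [Set.mem_prod]
      rw [hset, Measure.prod_prod, hBnull, mul_zero]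
    have hae1 : ∀ᵐ p ∂((volume.restrict D).prod (volume.restrict D)), p.1 ∉ B := by
      rw [ae_iff]; simpa using h1
    have hae2 : ∀ᵐ p ∂((volume.restrict D).prod (volume.restrict D)), p.2 ∉ B := by
      rw [ae_iff]; simpa using h2
    filter_upwards [hae1, hae2] with p hp1 hp2
    have e1 : v p.1 = g p.1 := by
      by_contra hne; exact hp1 (subset_toMeasurable _ _ hne)
    have e2 : v p.2 = g p.2 := by
      by_contra hne; exact hp2 (subset_toMeasurable _ _ hne)
    simp only [hRgdef, e1, e2]
  have hRgInt : Integrable Rg ((volume.restrict D).prod (volume.restrict D)) :=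
    hsem.congr hRae
  have hRgnonneg : ∀ p, 0 ≤ Rg p := fun p => by
    apply div_nonneg (by positivity)
    positivity
  -- per-stratum facts
  set c : Fin N → ℝ := fun i => (volume (T i)).toReal with hcdef
  have hc_pos : ∀ i, 0 < c i := fun i => ENNReal.toReal_pos (hTpos i).ne' (hTfin i).ne
  have hμT_le : ∀ i, volume.restrict (T i) ≤ volume.restrict D := fun i =>
    Measure.restrict_mono (hTsub i) le_rfl
  have hg2T : ∀ i, MemLp g 2 (volume.restrict (T i)) := fun i => hg2.mono_measure (hμT_le i)
  have hgL1T : ∀ i, Integrable g (volume.restrict (T i)) := fun i =>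
    (hg2T i).integrable one_le_two
  have hgsqT : ∀ i, Integrable (fun x => g x ^ 2) (volume.restrict (T i)) := fun i =>
    (hg2T i).integrable_sq
  -- absolute continuity of the laws
  have hac : ∀ i, ((volume (T i))⁻¹ • volume.restrict (T i)) ≪ volume.restrict D := by
    intro i sset hs0'
    have h0 : volume.restrict (T i) sset = 0 :=
      le_antisymm (le_trans (Measure.le_iff'.1 (hμT_le i) sset) hs0'.le) (by positivity)
    simp [Measure.smul_apply, h0]
  -- integrals against the law of `Z i`
  have hmapint : ∀ i (f : EuclideanSpace ℝ (Fin 2) → ℝ), StronglyMeasurable f →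
      ∫ ω, f (Z i ω) ∂P = (c i)⁻¹ * ∫ x in T i, f x := by
    intro i f hf
    have h1 : ∫ ω, f (Z i ω) ∂P = ∫ x, f x ∂(Measure.map (Z i) P) :=
      (integral_map (hZmeas i).aemeasurable hf.aestronglyMeasurable).symm
    rw [h1, hZlaw i, integral_smul_measure, ENNReal.toReal_inv, smul_eq_mul]
  -- the random variables `Y i`
  set Y : Fin N → Ω → ℝ := fun i ω => c i * g (Z i ω) with hYdef
  have hgZmem : ∀ i, MemLp (fun ω => g (Z i ω)) 2 P := by
    intro i
    have hsmul : MemLp g 2 ((volume (T i))⁻¹ • volume.restrict (T i)) :=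
      (hg2T i).smul_measure (ENNReal.inv_ne_top.mpr (hTpos i).ne')
    have h' : MemLp g 2 (Measure.map (Z i) P) := by rw [hZlaw i]; exact hsmul
    exact (memLp_map_measure_iff hgsm.aestronglyMeasurable (hZmeas i).aemeasurable).mp h'
  have hYmem : ∀ i, MemLp (Y i) 2 P := fun i => (hgZmem i).const_mul (c i)
  have hEY : ∀ i, ∫ ω, Y i ω ∂P = ∫ x in T i, g x := by
    intro i
    simp only [hYdef]
    rw [integral_const_mul, hmapint i g hgsm, ← mul_assoc,
      mul_inv_cancel₀ (hc_pos i).ne', one_mul]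
  have hEY2 : ∀ i, ∫ ω, (Y i ω) ^ 2 ∂P = c i * ∫ x in T i, g x ^ 2 := by
    intro i
    have hm' : ∫ ω, g (Z i ω) ^ 2 ∂P = (c i)⁻¹ * ∫ x in T i, g x ^ 2 :=
      hmapint i (fun x => g x ^ 2) ((hgmeas.pow_const 2).stronglyMeasurable)
    have he : ∀ ω, (Y i ω) ^ 2 = c i ^ 2 * g (Z i ω) ^ 2 := fun ω => by
      simp only [hYdef]; ring
    simp only [he]
    rw [integral_const_mul, hm', ← mul_assoc]
    congr 1
    rw [pow_two, mul_assoc, mul_inv_cancel₀ (hc_pos i).ne', mul_one]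
  have hvarY : ∀ i, variance (Y i) P
      = c i * (∫ x in T i, g x ^ 2) - (∫ x in T i, g x) ^ 2 := by
    intro i
    rw [variance_eq_sub (hYmem i)]
    simp only [Pi.pow_apply]
    rw [hEY2 i, hEY i]
  -- the variance as a double integral over `T i × T i`
  have hkey : ∀ i, ∫ p, (g p.1 - g p.2) ^ 2
        ∂((volume.restrict (T i)).prod (volume.restrict (T i)))
      = 2 * (c i * (∫ x in T i, g x ^ 2) - (∫ x in T i, g x) ^ 2) := by
    intro i
    have hIsq1 : Integrable (fun p : EuclideanSpace ℝ (Fin 2) × EuclideanSpace ℝ (Fin 2) =>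
        g p.1 ^ 2) ((volume.restrict (T i)).prod (volume.restrict (T i))) := by
      have h0 := (hgsqT i).mul_prod (integrable_const (μ := volume.restrict (T i)) (1:ℝ))
      exact h0.congr (Filter.Eventually.of_forall fun p => by simp)
    have hIsq2 : Integrable (fun p : EuclideanSpace ℝ (Fin 2) × EuclideanSpace ℝ (Fin 2) =>
        g p.2 ^ 2) ((volume.restrict (T i)).prod (volume.restrict (T i))) := by
      have h0 := (integrable_const (μ := volume.restrict (T i)) (1:ℝ)).mul_prod (hgsqT i)
      exact h0.congr (Filter.Eventually.of_forall fun p => by simp)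
    have hIadd : Integrable (fun p : EuclideanSpace ℝ (Fin 2) × EuclideanSpace ℝ (Fin 2) =>
        g p.1 ^ 2 + g p.2 ^ 2) ((volume.restrict (T i)).prod (volume.restrict (T i))) :=
      hIsq1.add hIsq2
    have hImul : Integrable (fun p : EuclideanSpace ℝ (Fin 2) × EuclideanSpace ℝ (Fin 2) =>
        2 * (g p.1 * g p.2)) ((volume.restrict (T i)).prod (volume.restrict (T i))) :=
      ((hgL1T i).mul_prod (hgL1T i)).const_mul 2
    have e1 : ∫ p, g p.1 ^ 2 ∂((volume.restrict (T i)).prod (volume.restrict (T i)))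
        = (∫ x in T i, g x ^ 2) * c i := by
      have h0 := integral_prod_mul (μ := volume.restrict (T i)) (ν := volume.restrict (T i))
        (fun x => g x ^ 2) (fun _ => (1:ℝ))
      simp only [mul_one, integral_const, smul_eq_mul, Measure.restrict_apply_univ,
        measureReal_restrict_apply_univ, measureReal_def] at h0
      exact h0
    have e2 : ∫ p, g p.2 ^ 2 ∂((volume.restrict (T i)).prod (volume.restrict (T i)))
        = c i * ∫ x in T i, g x ^ 2 := by
      have h0 := integral_prod_mul (μ := volume.restrict (T i)) (ν := volume.restrict (T i))
        (fun _ => (1:ℝ)) (fun x => g x ^ 2)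
      simp only [one_mul, integral_const, smul_eq_mul, mul_one,
        Measure.restrict_apply_univ, measureReal_restrict_apply_univ, measureReal_def] at h0
      exact h0
    have e3 := integral_prod_mul (μ := volume.restrict (T i)) (ν := volume.restrict (T i)) g g
    calc ∫ p, (g p.1 - g p.2) ^ 2 ∂((volume.restrict (T i)).prod (volume.restrict (T i)))
        = ∫ p, (g p.1 ^ 2 + g p.2 ^ 2 - 2 * (g p.1 * g p.2))
            ∂((volume.restrict (T i)).prod (volume.restrict (T i))) := by
          apply integral_congr_ae
          apply Filter.Eventually.of_forall
          intro p; ring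
      _ = (∫ p, (g p.1 ^ 2 + g p.2 ^ 2)
            ∂((volume.restrict (T i)).prod (volume.restrict (T i))))
          - ∫ p, 2 * (g p.1 * g p.2)
            ∂((volume.restrict (T i)).prod (volume.restrict (T i))) :=
          integral_sub hIadd hImul
      _ = ((∫ p, g p.1 ^ 2 ∂((volume.restrict (T i)).prod (volume.restrict (T i))))
            + ∫ p, g p.2 ^ 2 ∂((volume.restrict (T i)).prod (volume.restrict (T i))))
          - 2 * ∫ p, g p.1 * g p.2
            ∂((volume.restrict (T i)).prod (volume.restrict (T i))) := by
          exact congrArg₂ (· - ·) (integral_add hIsq1 hIsq2) (integral_const_mul 2 _)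
      _ = 2 * (c i * (∫ x in T i, g x ^ 2) - (∫ x in T i, g x) ^ 2) := by
          rw [e1, e2, e3]; ring
  -- pointwise comparison with the Sobolev integrand on each stratum
  have hptw : ∀ i, ∀ᵐ p ∂((volume.restrict (T i)).prod (volume.restrict (T i))),
      (g p.1 - g p.2) ^ 2 ≤ h ^ (2 + 2 * s) * Rg p := by
    intro i
    have hmem : ∀ᵐ p ∂((volume.restrict (T i)).prod (volume.restrict (T i))),
        p ∈ T i ×ˢ T i := by
      rw [Measure.prod_restrict]
      exact ae_restrict_mem ((hTmeas i).prod (hTmeas i))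
    filter_upwards [hmem] with p hp
    obtain ⟨hp1, hp2⟩ := hp
    have hd : dist p.1 p.2 ≤ h := hTdiam i _ hp1 _ hp2
    rcases eq_or_lt_of_le (dist_nonneg : (0:ℝ) ≤ dist p.1 p.2) with hdd | hd0
    · have hpeq : p.1 = p.2 := by
        rw [← dist_eq_zero]; exact hdd.symm
      have hz : Rg p = 0 := by
        simp [hRgdef, hpeq]
      rw [hpeq, hz, sub_self]
      simp
    · have hdq : dist p.1 p.2 ^ (2 + 2 * s) ≤ h ^ (2 + 2 * s) :=
        Real.rpow_le_rpow dist_nonneg hd hq0.le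
      have hdqpos : (0:ℝ) < dist p.1 p.2 ^ (2 + 2 * s) := Real.rpow_pos_of_pos hd0 _
      have hRp : Rg p = (g p.1 - g p.2) ^ 2 / dist p.1 p.2 ^ (2 + 2 * s) := by
        rw [hRgdef]; simp [sq_abs]
      rw [hRp]
      calc (g p.1 - g p.2) ^ 2
          = ((g p.1 - g p.2) ^ 2 / dist p.1 p.2 ^ (2 + 2 * s))
              * dist p.1 p.2 ^ (2 + 2 * s) := by
            field_simp
        _ ≤ ((g p.1 - g p.2) ^ 2 / dist p.1 p.2 ^ (2 + 2 * s)) * h ^ (2 + 2 * s) := by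
            apply mul_le_mul_of_nonneg_left hdq (by positivity)
        _ = h ^ (2 + 2 * s) * ((g p.1 - g p.2) ^ 2 / dist p.1 p.2 ^ (2 + 2 * s)) :=
            mul_comm _ _
  -- integrability of `Rg` on each product stratum
  have hRgIntT : ∀ i, Integrable Rg
      ((volume.restrict (T i)).prod (volume.restrict (T i))) := by
    intro i
    have hle : (volume.restrict (T i)).prod (volume.restrict (T i))
        ≤ (volume.restrict D).prod (volume.restrict D) := by
      rw [Measure.prod_restrict, Measure.prod_restrict]
      exact Measure.restrict_mono (Set.prod_mono (hTsub i) (hTsub i)) le_rfl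
    exact hRgInt.mono_measure hle
  -- variance bound on each stratum
  have hvar_le : ∀ i, variance (Y i) P
      ≤ h ^ (2 + 2 * s)
        * ∫ p, Rg p ∂((volume.restrict (T i)).prod (volume.restrict (T i))) := by
    intro i
    have hFint : Integrable (fun p : EuclideanSpace ℝ (Fin 2) × EuclideanSpace ℝ (Fin 2) =>
        (g p.1 - g p.2) ^ 2) ((volume.restrict (T i)).prod (volume.restrict (T i))) := by
      apply Integrable.mono' ((hRgIntT i).const_mul (h ^ (2 + 2 * s)))
      · exact (((hgmeas.comp measurable_fst).sub
          (hgmeas.comp measurable_snd)).pow_const 2).aestronglyMeasurable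
      · filter_upwards [hptw i] with p hp
        rwa [Real.norm_eq_abs, abs_of_nonneg (by positivity)]
    have h1 : ∫ p, (g p.1 - g p.2) ^ 2
          ∂((volume.restrict (T i)).prod (volume.restrict (T i)))
        ≤ h ^ (2 + 2 * s)
          * ∫ p, Rg p ∂((volume.restrict (T i)).prod (volume.restrict (T i))) := by
      rw [← integral_const_mul]
      exact integral_mono_ae hFint ((hRgIntT i).const_mul _) (hptw i)
    have h2 : variance (Y i) P
        = (1/2) * ∫ p, (g p.1 - g p.2) ^ 2
            ∂((volume.restrict (T i)).prod (volume.restrict (T i))) := by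
      rw [hkey i, hvarY i]; ring
    have h3 : (0:ℝ) ≤ ∫ p, (g p.1 - g p.2) ^ 2
        ∂((volume.restrict (T i)).prod (volume.restrict (T i))) :=
      integral_nonneg fun p => by positivity
    calc variance (Y i) P
        = (1/2) * ∫ p, (g p.1 - g p.2) ^ 2
            ∂((volume.restrict (T i)).prod (volume.restrict (T i))) := h2
      _ ≤ ∫ p, (g p.1 - g p.2) ^ 2
            ∂((volume.restrict (T i)).prod (volume.restrict (T i))) := by linarith
      _ ≤ h ^ (2 + 2 * s)
            * ∫ p, Rg p ∂((volume.restrict (T i)).prod (volume.restrict (T i))) := h1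
  -- summing the strata
  have hprodT : ∀ i, (volume.restrict (T i)).prod (volume.restrict (T i))
      = ((volume : Measure (EuclideanSpace ℝ (Fin 2))).prod volume).restrict (T i ×ˢ T i) :=
    fun i => Measure.prod_restrict (T i) (T i)
  have hprodD : (volume.restrict D).prod (volume.restrict D)
      = ((volume : Measure (EuclideanSpace ℝ (Fin 2))).prod volume).restrict (D ×ˢ D) :=
    Measure.prod_restrict D D
  have hdisj2 : Pairwise (Function.onFun Disjoint (fun i => T i ×ˢ T i)) := by
    intro i j hij
    have hd := hTdisj hij
    rw [Function.onFun] at hd ⊢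
    rw [Set.disjoint_left] at hd ⊢
    rintro p ⟨hp1, _⟩ ⟨hp1', _⟩
    exact hd hp1 hp1'
  have hsum : ∑ i, ∫ p in T i ×ˢ T i, Rg p ∂(volume.prod volume)
      ≤ ∫ p in D ×ˢ D, Rg p ∂(volume.prod volume) := by
    rw [← integral_iUnion_fintype (fun i => (hTmeas i).prod (hTmeas i)) hdisj2
      (fun i => by rw [IntegrableOn, ← hprodT i]; exact hRgIntT i)]
    apply setIntegral_mono_set
    · rw [IntegrableOn, ← hprodD]; exact hRgInt
    · exact Filter.Eventually.of_forall fun p => hRgnonneg p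
    · apply HasSubset.Subset.eventuallyLE
      apply Set.iUnion_subset
      intro i
      exact Set.prod_mono (hTsub i) (hTsub i)
  -- identify the left-hand side with the variance of the sum
  have hvInt : Integrable v (volume.restrict D) := hv.integrable one_le_two
  have hUae : D =ᵐ[volume] ⋃ i, T i := by
    rw [ae_eq_set]
    constructor
    · exact hcover
    · have hempty : (⋃ i, T i) \ D = ∅ := Set.diff_eq_empty.mpr (Set.iUnion_subset hTsub)
      rw [hempty]; simp
  have hsplitv : ∫ x in D, v x = ∑ i, ∫ x in T i, v x := by
    rw [setIntegral_congr_set hUae]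
    exact integral_iUnion_fintype hTmeas hTdisj
      (fun i => hvInt.mono_measure (hμT_le i))
  have hvgT : ∀ i, ∫ x in T i, v x = ∫ x in T i, g x := fun i =>
    integral_congr_ae (hvg.filter_mono (ae_mono (hμT_le i)))
  have hSsum : ∫ x in D, v x = ∑ i, ∫ x in T i, g x := by
    rw [hsplitv]; exact Finset.sum_congr rfl fun i _ => hvgT i
  -- a.e. replacement of `v` by `g` along the samples
  have hvZae : ∀ᵐ ω ∂P, ∀ i, v (Z i ω) = g (Z i ω) := by
    rw [ae_all_iff]
    intro i
    apply ae_eq_comp (hZmeas i).aemeasurable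
    rw [hZlaw i]
    exact hvg.filter_mono ((hac i).ae_le)
  have hEsum : ∫ ω, ∑ i, Y i ω ∂P = ∑ i, ∫ x in T i, g x := by
    rw [integral_finset_sum _ fun i _ => (hYmem i).integrable one_le_two]
    exact Finset.sum_congr rfl fun i _ => hEY i
  have hLHS : ∫ ω, |(∫ x in D, v x) - ∑ i, c i * v (Z i ω)| ^ 2 ∂P
      = variance (∑ i, Y i) P := by
    rw [variance_eq_integral (memLp_finset_sum' _ (fun i (_ : i ∈ Finset.univ) => hYmem i)).1.aemeasurable]
    apply integral_congr_ae
    filter_upwards [hvZae] with ω hω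
    have h1 : ∑ i, c i * v (Z i ω) = ∑ i, Y i ω :=
      Finset.sum_congr rfl fun i _ => by rw [hω i]
    simp only [Pi.pow_apply, Pi.sub_apply, Finset.sum_apply]
    rw [hEsum, h1, hSsum, sq_abs]
    ring
  have hYindep : Set.Pairwise ↑(Finset.univ : Finset (Fin N))
      (fun i j => IndepFun (Y i) (Y j) P) := by
    intro i _ j _ hij
    exact (hZindep.indepFun hij).comp (hgmeas.const_mul (c i)) (hgmeas.const_mul (c j))
  have hvarsum : variance (∑ i, Y i) P = ∑ i, variance (Y i) P :=
    IndepFun.variance_sum (fun i _ => hYmem i) hYindep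
  -- identify the right-hand side
  have hRHS : ∫ x in D, ∫ z in D, |v x - v z| ^ 2 / dist x z ^ (2 + 2 * s)
      = ∫ p in D ×ˢ D, Rg p ∂(volume.prod volume) := by
    rw [← hprodD]
    have h1 : ∫ x in D, ∫ z in D, |v x - v z| ^ 2 / dist x z ^ (2 + 2 * s)
        = ∫ p : EuclideanSpace ℝ (Fin 2) × EuclideanSpace ℝ (Fin 2),
            |v p.1 - v p.2| ^ 2 / dist p.1 p.2 ^ (2 + 2 * s)
            ∂((volume.restrict D).prod (volume.restrict D)) :=
      integral_integral hsem
    rw [h1]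
    exact integral_congr_ae hRae
  -- put everything together
  rw [hLHS, hvarsum, hRHS]
  calc ∑ i, variance (Y i) P
      ≤ ∑ i, h ^ (2 + 2 * s)
          * ∫ p, Rg p ∂((volume.restrict (T i)).prod (volume.restrict (T i))) :=
        Finset.sum_le_sum fun i _ => hvar_le i
    _ = h ^ (2 + 2 * s) * ∑ i, ∫ p in T i ×ˢ T i, Rg p ∂(volume.prod volume) := by
        rw [Finset.mul_sum]
        exact Finset.sum_congr rfl fun i _ => by rw [hprodT i]
    _ ≤ h ^ (2 + 2 * s) * ∫ p in D ×ˢ D, Rg p ∂(volume.prod volume) := by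
        apply mul_le_mul_of_nonneg_left hsum (by positivity)
end

section
/- Let A, B, C ∈ ℝ² be affinely independent points with pairwise Euclidean distances at most h > 0, let T be the convex hull of {A, B, C}, and let φ : ℝ² → ℝ be the affine function with φ(A) = 1 and φ(B) = φ(C) = 0. Let Y be a random variable whose law has density p(x) = 3|T|^{-1} φ(x) 𝟙_T(x) with respect to Lebesgue measure. Then for every s ∈ (0,1) and every measurable f : T → ℝ with f²·φ ∈ L¹(T) it holds that E[|∫_T f(x)φ(x) dx − (|T|/3) f(Y)|²] ≤ h^{2+2s} ∫_T ∫_T |f(x) − f(z)|² / |x − z|^{2+2s} dx dz. -/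
open MeasureTheory ProbabilityTheory
open scoped ENNReal NNReal

set_option maxHeartbeats 1000000

/-- Mean-square error bound for the importance sampling estimator on a triangle
with edge lengths at most `h` via the fractional Sobolev seminorm:
`E[|∫_T f φ − (|T|/3) f(Y)|²] ≤ h^{2+2s} ∫_T ∫_T |f x − f z|²/|x−z|^{2+2s}`.
The right-hand side is formulated as a lower Lebesgue integral, so the
inequality also covers the case of an infinite seminorm. -/
theorem stmt_10
    {Ω : Type*} [MeasurableSpace Ω] (P : Measure Ω) [IsProbabilityMeasure P]
    (h : ℝ) (hh : 0 < h)
    (A B C : EuclideanSpace ℝ (Fin 2))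
    (hABC : AffineIndependent ℝ ![A, B, C])
    (hAB : dist A B ≤ h) (hAC : dist A C ≤ h) (hBC : dist B C ≤ h)
    (T : Set (EuclideanSpace ℝ (Fin 2))) (hT : T = convexHull ℝ {A, B, C})
    (φ : EuclideanSpace ℝ (Fin 2) →ᵃ[ℝ] ℝ)
    (hA : φ A = 1) (hB : φ B = 0) (hC : φ C = 0)
    (Y : Ω → EuclideanSpace ℝ (Fin 2)) (hYmeas : Measurable Y)
    (hYlaw : Measure.map Y P = volume.withDensity
      (fun x => ENNReal.ofReal
        (T.indicator (fun x => 3 * (volume T).toReal⁻¹ * φ x) x)))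
    (s : ℝ) (hs0 : 0 < s) (hs1 : s < 1)
    (f : EuclideanSpace ℝ (Fin 2) → ℝ) (hfmeas : Measurable f)
    (hfint : IntegrableOn (fun x => f x ^ 2 * φ x) T) :
    ENNReal.ofReal
        (∫ ω, |(∫ x in T, f x * φ x) - (volume T).toReal / 3 * f (Y ω)| ^ 2 ∂P)
      ≤ ENNReal.ofReal (h ^ (2 + 2 * s))
          * ∫⁻ x in T, ∫⁻ z in T,
              ENNReal.ofReal (|f x - f z| ^ 2 / dist x z ^ (2 + 2 * s)) := by
  classical
  have hfinite : ({A, B, C} : Set (EuclideanSpace ℝ (Fin 2))).Finite :=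
    Set.toFinite _
  have hTcomp : IsCompact T := by rw [hT]; exact hfinite.isCompact_convexHull ℝ
  have hTm : MeasurableSet T := hTcomp.measurableSet
  have hφcont : Continuous φ := φ.continuous_of_finiteDimensional
  have hφ01 : ∀ x ∈ T, φ x ∈ Set.Icc (0:ℝ) 1 := by
    intro x hx
    have hsub : T ⊆ φ ⁻¹' Set.Icc (0:ℝ) 1 := by
      rw [hT]
      refine convexHull_min ?_ ((convex_Icc (0:ℝ) 1).affine_preimage φ)
      rintro y (rfl | rfl | rfl) <;> simp [hA, hB, hC]
    exact hsub hx
  have hφ0 : ∀ x ∈ T, 0 ≤ φ x := fun x hx => (hφ01 x hx).1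
  have hφ1 : ∀ x ∈ T, φ x ≤ 1 := fun x hx => (hφ01 x hx).2
  set τ : ℝ := (volume T).toReal with hτdef
  have hτ0 : 0 ≤ τ := ENNReal.toReal_nonneg
  -- distances within T are at most h
  have hdiam : ∀ x ∈ T, ∀ z ∈ T, dist x z ≤ h := by
    intro x hx z hz
    have hd : Metric.diam T ≤ h := by
      rw [hT, convexHull_diam]
      refine Metric.diam_le_of_forall_dist_le hh.le ?_
      rintro a (rfl | rfl | rfl) b (rfl | rfl | rfl) <;>
        first
          | simpa [dist_self] using hh.le
          | assumption
          | (rw [dist_comm]; assumption)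
    exact (Metric.dist_le_diam_of_mem hTcomp.isBounded hx hz).trans hd
  -- integrability facts
  have hφint : IntegrableOn (fun x => φ x) T := hφcont.continuousOn.integrableOn_compact hTcomp
  have hfφint : IntegrableOn (fun x => f x * φ x) T := by
    have hbound : IntegrableOn (fun x => 1/2 * (f x ^ 2 * φ x + φ x)) T :=
      (hfint.add hφint).const_mul (1/2)
    refine hbound.mono' ((hfmeas.mul hφcont.measurable).aestronglyMeasurable) ?_
    refine (ae_restrict_iff' hTm).2 (Filter.Eventually.of_forall fun x hx => ?_)
    have h0 := hφ0 x hx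
    rw [Real.norm_eq_abs, abs_mul, abs_of_nonneg h0]
    nlinarith [sq_nonneg (|f x| - 1), abs_nonneg (f x), sq_abs (f x)]
  -- total mass of the law
  set W : ℝ≥0∞ := ∫⁻ x in T, ENNReal.ofReal (φ x) with hWdef
  have hK0 : (0:ℝ) ≤ 3 * τ⁻¹ := by positivity
  have hmass : ENNReal.ofReal (3 * τ⁻¹) * W = 1 := by
    have h1 : Measure.map Y P Set.univ = 1 := by
      rw [Measure.map_apply hYmeas MeasurableSet.univ]; simp
    rw [hYlaw, withDensity_apply _ MeasurableSet.univ, Measure.restrict_univ] at h1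
    rw [← h1]
    rw [show (fun x => ENNReal.ofReal (T.indicator (fun x => 3 * τ⁻¹ * φ x) x))
        = T.indicator (fun x => ENNReal.ofReal (3 * τ⁻¹) * ENNReal.ofReal (φ x)) from ?_]
    · rw [lintegral_indicator hTm, lintegral_const_mul' _ _ ENNReal.ofReal_ne_top]
    · funext x
      by_cases hx : x ∈ T
      · simp [Set.indicator_of_mem hx, ENNReal.ofReal_mul hK0]
      · simp [Set.indicator_of_notMem hx]
  have hτpos : 0 < τ := by
    rcases eq_or_lt_of_le hτ0 with heq | hlt
    · exfalso
      rw [← heq] at hmass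
      simp at hmass
    · exact hlt
  have hKpos : (0:ℝ) < 3 * τ⁻¹ := by positivity
  have hW : W = ENNReal.ofReal (τ / 3) := by
    have h2 : W = (ENNReal.ofReal (3 * τ⁻¹))⁻¹ :=
      ENNReal.eq_inv_of_mul_eq_one_left (by rw [mul_comm]; exact hmass)
    rw [h2, ← ENNReal.ofReal_inv_of_pos hKpos]
    congr 1
    field_simp
  have hmass' : ENNReal.ofReal (3 * τ⁻¹) * ENNReal.ofReal (τ / 3) = 1 := by
    rw [← hW]; exact hmass
  -- the integral of φ over T
  have hφT : ∫ x in T, φ x = τ / 3 := by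
    have hφ0ae : 0 ≤ᵐ[volume.restrict T] fun x => φ x :=
      (ae_restrict_iff' hTm).2 (Filter.Eventually.of_forall hφ0)
    have heq := ofReal_integral_eq_lintegral_ofReal hφint hφ0ae
    rw [← hWdef, hW] at heq
    exact (ENNReal.ofReal_eq_ofReal_iff (setIntegral_nonneg hTm hφ0) (by positivity)).1 heq
  set I : ℝ := ∫ x in T, f x * φ x with hIdef
  -- kernel identity
  have hker : ∀ y, I - τ / 3 * f y = ∫ x in T, (f x - f y) * φ x := by
    intro y
    have hsubi : IntegrableOn (fun x => f y * φ x) T := hφint.const_mul (f y)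
    simp_rw [sub_mul]
    rw [integral_sub hfφint hsubi, integral_const_mul, hφT, ← hIdef]
    ring
  -- pointwise Cauchy-Schwarz bound
  have hCS : ∀ y : EuclideanSpace ℝ (Fin 2),
      ENNReal.ofReal (|I - τ / 3 * f y| ^ 2)
        ≤ ENNReal.ofReal (τ / 3)
          * ∫⁻ x in T, ENNReal.ofReal (|f x - f y| ^ 2) * ENNReal.ofReal (φ x) := by
    intro y
    set S : ℝ≥0∞ := ∫⁻ x in T, ENNReal.ofReal (|f x - f y| ^ 2) * ENNReal.ofReal (φ x)
      with hSdef
    have huint : IntegrableOn (fun x => (f x - f y) * φ x) T := by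
      have := hfφint.sub (hφint.const_mul (f y))
      simpa [sub_mul, Pi.sub_def] using this
    have habs : IntegrableOn (fun x => |f x - f y| * φ x) T := by
      refine Integrable.congr huint.abs
        ((ae_restrict_iff' hTm).2 (Filter.Eventually.of_forall fun x hx => ?_))
      show |(f x - f y) * φ x| = |f x - f y| * φ x
      rw [abs_mul, abs_of_nonneg (hφ0 x hx)]
    have hstep2 : |I - τ / 3 * f y| ≤ ∫ x in T, |f x - f y| * φ x := by
      rw [hker y]
      calc |∫ x in T, (f x - f y) * φ x| ≤ ∫ x in T, |f x - f y| * |φ x| := by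
            simpa [Real.norm_eq_abs, abs_mul] using
              norm_integral_le_integral_norm (μ := volume.restrict T)
                (fun x => (f x - f y) * φ x)
        _ = ∫ x in T, |f x - f y| * φ x := by
            refine integral_congr_ae
              ((ae_restrict_iff' hTm).2 (Filter.Eventually.of_forall fun x hx => ?_))
            show |f x - f y| * |φ x| = |f x - f y| * φ x
            rw [abs_of_nonneg (hφ0 x hx)]
    have hstep3 : ENNReal.ofReal (∫ x in T, |f x - f y| * φ x)
        = ∫⁻ x in T, ENNReal.ofReal (|f x - f y| * φ x) :=
      ofReal_integral_eq_lintegral_ofReal habs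
        ((ae_restrict_iff' hTm).2 (Filter.Eventually.of_forall fun x hx =>
          mul_nonneg (abs_nonneg _) (hφ0 x hx)))
    set F : EuclideanSpace ℝ (Fin 2) → ℝ≥0∞ :=
      fun x => ENNReal.ofReal (|f x - f y| * Real.sqrt (φ x)) with hF
    set G : EuclideanSpace ℝ (Fin 2) → ℝ≥0∞ :=
      fun x => ENNReal.ofReal (Real.sqrt (φ x)) with hG
    have hsqrtmeas : Measurable fun x => Real.sqrt (φ x) :=
      (Real.continuous_sqrt.comp hφcont).measurable
    have hFmeas : AEMeasurable F (volume.restrict T) :=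
      (((hfmeas.sub measurable_const).abs.mul hsqrtmeas).ennreal_ofReal).aemeasurable
    have hGmeas : AEMeasurable G (volume.restrict T) :=
      (hsqrtmeas.ennreal_ofReal).aemeasurable
    have hpq : Real.HolderConjugate 2 2 := ⟨by norm_num, by norm_num, by norm_num⟩
    have hholder := ENNReal.lintegral_mul_le_Lp_mul_Lq (volume.restrict T) hpq hFmeas hGmeas
    have hFG : ∫⁻ x in T, ENNReal.ofReal (|f x - f y| * φ x) = ∫⁻ a in T, (F * G) a := by
      refine lintegral_congr_ae
        ((ae_restrict_iff' hTm).2 (Filter.Eventually.of_forall fun x hx => ?_))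
      simp only [Pi.mul_apply, hF, hG]
      rw [← ENNReal.ofReal_mul (by positivity), mul_assoc,
        Real.mul_self_sqrt (hφ0 x hx)]
    have hF2 : ∫⁻ a in T, F a ^ (2:ℝ) = S := by
      rw [hSdef]
      refine lintegral_congr_ae
        ((ae_restrict_iff' hTm).2 (Filter.Eventually.of_forall fun x hx => ?_))
      simp only [hF]
      rw [ENNReal.ofReal_rpow_of_nonneg (by positivity) (by norm_num),
        ← ENNReal.ofReal_mul (by positivity)]
      congr 1
      rw [show (2:ℝ) = ((2:ℕ):ℝ) from by norm_num, Real.rpow_natCast, mul_pow,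
        Real.sq_sqrt (hφ0 x hx)]
    have hG2 : ∫⁻ a in T, G a ^ (2:ℝ) = W := by
      rw [hWdef]
      refine lintegral_congr_ae
        ((ae_restrict_iff' hTm).2 (Filter.Eventually.of_forall fun x hx => ?_))
      simp only [hG]
      rw [ENNReal.ofReal_rpow_of_nonneg (Real.sqrt_nonneg _) (by norm_num)]
      congr 1
      rw [show (2:ℝ) = ((2:ℕ):ℝ) from by norm_num, Real.rpow_natCast,
        Real.sq_sqrt (hφ0 x hx)]
    have hb : ENNReal.ofReal (|I - τ / 3 * f y|)
        ≤ ∫⁻ x in T, ENNReal.ofReal (|f x - f y| * φ x) :=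
      le_trans (ENNReal.ofReal_le_ofReal hstep2) (le_of_eq hstep3)
    calc ENNReal.ofReal (|I - τ / 3 * f y| ^ 2)
        = ENNReal.ofReal (|I - τ / 3 * f y|) ^ 2 :=
          ENNReal.ofReal_pow (abs_nonneg _) 2
      _ ≤ (∫⁻ x in T, ENNReal.ofReal (|f x - f y| * φ x)) ^ 2 :=
          pow_le_pow_left' hb 2
      _ = (∫⁻ a in T, (F * G) a) ^ 2 := by rw [hFG]
      _ ≤ ((∫⁻ a in T, F a ^ (2:ℝ)) ^ (1/2 : ℝ) * (∫⁻ a in T, G a ^ (2:ℝ)) ^ (1/2 : ℝ)) ^ 2 :=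
          pow_le_pow_left' hholder 2
      _ = (∫⁻ a in T, F a ^ (2:ℝ)) * (∫⁻ a in T, G a ^ (2:ℝ)) := by
          rw [mul_pow, ← ENNReal.rpow_natCast ((∫⁻ a in T, F a ^ (2:ℝ)) ^ (1/2 : ℝ)) 2,
            ← ENNReal.rpow_natCast ((∫⁻ a in T, G a ^ (2:ℝ)) ^ (1/2 : ℝ)) 2,
            ← ENNReal.rpow_mul, ← ENNReal.rpow_mul]
          norm_num
      _ = S * W := by rw [hF2, hG2]
      _ = ENNReal.ofReal (τ / 3) * S := by rw [hW, mul_comm]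
  -- measurability of the integrand
  have hGm : Measurable fun y => ENNReal.ofReal (|I - τ / 3 * f y| ^ 2) :=
    (((hfmeas.const_mul (τ / 3)).const_sub I).abs.pow_const 2).ennreal_ofReal
  have hwmeas : Measurable fun x =>
      ENNReal.ofReal (T.indicator (fun x => 3 * τ⁻¹ * φ x) x) :=
    ((hφcont.measurable.const_mul (3 * τ⁻¹)).indicator hTm).ennreal_ofReal
  -- reduce to a lintegral statement
  rcases em (Integrable (fun ω => |I - τ / 3 * f (Y ω)| ^ 2) P) with hInt | hInt
  swap
  · rw [integral_undef hInt]
    simp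
  rw [ofReal_integral_eq_lintegral_ofReal hInt
    (Filter.Eventually.of_forall fun ω => by positivity)]
  have hmap : ∫⁻ ω, ENNReal.ofReal (|I - τ / 3 * f (Y ω)| ^ 2) ∂P
      = ∫⁻ a, ((fun x => ENNReal.ofReal (T.indicator (fun x => 3 * τ⁻¹ * φ x) x))
          * fun y => ENNReal.ofReal (|I - τ / 3 * f y| ^ 2)) a := by
    rw [← lintegral_withDensity_eq_lintegral_mul _ hwmeas hGm, ← hYlaw,
      lintegral_map hGm hYmeas]
  rw [hmap]
  have e1 : ∫⁻ a, ((fun x => ENNReal.ofReal (T.indicator (fun x => 3 * τ⁻¹ * φ x) x))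
          * fun y => ENNReal.ofReal (|I - τ / 3 * f y| ^ 2)) a
      = ∫⁻ y in T, ENNReal.ofReal (3 * τ⁻¹) * ENNReal.ofReal (φ y)
          * ENNReal.ofReal (|I - τ / 3 * f y| ^ 2) := by
    rw [← lintegral_indicator hTm]
    refine lintegral_congr fun y => ?_
    by_cases hy : y ∈ T
    · simp [Set.indicator_of_mem hy, ENNReal.ofReal_mul hK0]
    · simp [Set.indicator_of_notMem hy]
  rw [e1]
  have e2 : ∀ y ∈ T, ENNReal.ofReal (3 * τ⁻¹) * ENNReal.ofReal (φ y)
        * ENNReal.ofReal (|I - τ / 3 * f y| ^ 2)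
      ≤ ∫⁻ x in T, ENNReal.ofReal (|f x - f y| ^ 2) := by
    intro y hy
    calc ENNReal.ofReal (3 * τ⁻¹) * ENNReal.ofReal (φ y)
          * ENNReal.ofReal (|I - τ / 3 * f y| ^ 2)
        ≤ ENNReal.ofReal (3 * τ⁻¹) * ENNReal.ofReal (φ y)
          * (ENNReal.ofReal (τ / 3)
            * ∫⁻ x in T, ENNReal.ofReal (|f x - f y| ^ 2) * ENNReal.ofReal (φ x)) :=
          mul_le_mul_right (hCS y) _
      _ = (ENNReal.ofReal (3 * τ⁻¹) * ENNReal.ofReal (τ / 3))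
          * (ENNReal.ofReal (φ y)
            * ∫⁻ x in T, ENNReal.ofReal (|f x - f y| ^ 2) * ENNReal.ofReal (φ x)) := by
          ring
      _ = ENNReal.ofReal (φ y)
            * ∫⁻ x in T, ENNReal.ofReal (|f x - f y| ^ 2) * ENNReal.ofReal (φ x) := by
          rw [hmass', one_mul]
      _ ≤ 1 * ∫⁻ x in T, ENNReal.ofReal (|f x - f y| ^ 2) := by
          refine mul_le_mul' (ENNReal.ofReal_le_one.2 (hφ1 y hy)) ?_
          refine lintegral_mono_ae
            ((ae_restrict_iff' hTm).2 (Filter.Eventually.of_forall fun x hx => ?_))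
          exact mul_le_of_le_one_right zero_le (ENNReal.ofReal_le_one.2 (hφ1 x hx))
      _ = ∫⁻ x in T, ENNReal.ofReal (|f x - f y| ^ 2) := one_mul _
  have e3 : ∀ x ∈ T, ∀ y ∈ T, ENNReal.ofReal (|f x - f y| ^ 2)
      ≤ ENNReal.ofReal (h ^ (2 + 2 * s))
        * ENNReal.ofReal (|f x - f y| ^ 2 / dist x y ^ (2 + 2 * s)) := by
    intro x hx y hy
    by_cases hxy : dist x y = 0
    · have hfe : f x - f y = 0 := by rw [dist_eq_zero.mp hxy]; ring
      simp [hfe]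
    · have hd0 : 0 < dist x y := lt_of_le_of_ne dist_nonneg (Ne.symm hxy)
      have hdp : 0 < dist x y ^ (2 + 2 * s) := Real.rpow_pos_of_pos hd0 _
      have key : |f x - f y| ^ 2
          = |f x - f y| ^ 2 / dist x y ^ (2 + 2 * s) * dist x y ^ (2 + 2 * s) := by
        field_simp
      conv_lhs => rw [key]
      rw [ENNReal.ofReal_mul (by positivity), mul_comm]
      exact mul_le_mul'
        (ENNReal.ofReal_le_ofReal
          (Real.rpow_le_rpow dist_nonneg (hdiam x hx y hy) (by positivity)))
        (le_refl _)
  calc ∫⁻ y in T, ENNReal.ofReal (3 * τ⁻¹) * ENNReal.ofReal (φ y)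
        * ENNReal.ofReal (|I - τ / 3 * f y| ^ 2)
      ≤ ∫⁻ y in T, ∫⁻ x in T, ENNReal.ofReal (|f x - f y| ^ 2) :=
        lintegral_mono_ae ((ae_restrict_iff' hTm).2 (Filter.Eventually.of_forall e2))
    _ ≤ ∫⁻ y in T, ∫⁻ x in T, ENNReal.ofReal (h ^ (2 + 2 * s))
          * ENNReal.ofReal (|f x - f y| ^ 2 / dist x y ^ (2 + 2 * s)) := by
        refine lintegral_mono_ae
          ((ae_restrict_iff' hTm).2 (Filter.Eventually.of_forall fun y hy => ?_))
        refine lintegral_mono_ae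
          ((ae_restrict_iff' hTm).2 (Filter.Eventually.of_forall fun x hx => ?_))
        exact e3 x hx y hy
    _ = ENNReal.ofReal (h ^ (2 + 2 * s))
          * ∫⁻ y in T, ∫⁻ x in T,
              ENNReal.ofReal (|f x - f y| ^ 2 / dist x y ^ (2 + 2 * s)) := by
        rw [← lintegral_const_mul' _ _ ENNReal.ofReal_ne_top]
        exact lintegral_congr fun y => lintegral_const_mul' _ _ ENNReal.ofReal_ne_top
    _ = ENNReal.ofReal (h ^ (2 + 2 * s))
          * ∫⁻ x in T, ∫⁻ z in T,
              ENNReal.ofReal (|f x - f z| ^ 2 / dist x z ^ (2 + 2 * s)) := by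
        congr 1
        exact lintegral_congr fun a => lintegral_congr fun b => by
          rw [abs_sub_comm, dist_comm]
end

section
/- Let U₁ and U₂ be independent random variables, each uniformly distributed on the interval [0,1], and define the random variable Z : Ω → ℝ² by Z = (U₁, U₂) if U₁ + U₂ ≤ 1 and Z = (1 − U₁, 1 − U₂) otherwise. Then Z is uniformly distributed on the standard 2-simplex S₂ = {(α, β) ∈ ℝ² : α ≥ 0, β ≥ 0, α + β ≤ 1}; that is, the law of Z equals 2 times the Lebesgue measure restricted to S₂. -/
open MeasureTheory ProbabilityTheory Set

-- auxiliary: the diagonal line has measure zero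
lemma line_null : (volume : Measure (ℝ × ℝ)) {p : ℝ × ℝ | p.1 + p.2 = 1} = 0 := by
  have hm : MeasurableSet {p : ℝ × ℝ | p.1 + p.2 = 1} :=
    (measurable_fst.add measurable_snd) (measurableSet_singleton 1)
  rw [Measure.volume_eq_prod ℝ ℝ, Measure.prod_apply hm]
  have h0 : ∀ x : ℝ, (volume {a : ℝ | x + a = 1}) = 0 := by
    intro x
    have : {a : ℝ | x + a = 1} = {1 - x} := by
      ext y; simp only [Set.mem_setOf_eq, Set.mem_singleton_iff]
      constructor <;> intro h <;> linarith
    rw [this]; simp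
  simp only [Set.preimage_setOf_eq]
  simp [h0]

lemma mp_g : MeasurePreserving (fun p : ℝ × ℝ => (1 - p.1, 1 - p.2)) volume volume := by
  have h1 : MeasurePreserving (fun x : ℝ => 1 - x) volume volume := by
    have := (Measure.measurePreserving_neg (volume : Measure ℝ)).comp
      (measurePreserving_add_right (volume : Measure ℝ) (-1))
    convert this using 2 with x
    simp
    ring
  have := h1.prod h1
  rwa [← Measure.volume_eq_prod ℝ ℝ] at this

/-- The folding construction produces a uniformly distributed sample on the
standard 2-simplex: if `U₁, U₂` are independent and uniform on `[0,1]` and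
`Z = (U₁, U₂)` when `U₁ + U₂ ≤ 1`, `Z = (1−U₁, 1−U₂)` otherwise, then the law
of `Z` is `2` times Lebesgue measure restricted to the simplex. -/
theorem stmt_11
    {Ω : Type*} [MeasurableSpace Ω] (P : Measure Ω) [IsProbabilityMeasure P]
    (U₁ U₂ : Ω → ℝ) (hU₁meas : Measurable U₁) (hU₂meas : Measurable U₂)
    (hU₁law : Measure.map U₁ P = volume.restrict (Set.Icc (0 : ℝ) 1))
    (hU₂law : Measure.map U₂ P = volume.restrict (Set.Icc (0 : ℝ) 1))
    (hindep : IndepFun U₁ U₂ P)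
    (Z : Ω → ℝ × ℝ)
    (hZ : ∀ ω, Z ω =
      if U₁ ω + U₂ ω ≤ 1 then (U₁ ω, U₂ ω) else (1 - U₁ ω, 1 - U₂ ω)) :
    Measure.map Z P
      = (2 : ENNReal)
          • volume.restrict {p : ℝ × ℝ | 0 ≤ p.1 ∧ 0 ≤ p.2 ∧ p.1 + p.2 ≤ 1} := by
  set S : Set (ℝ × ℝ) := {p : ℝ × ℝ | 0 ≤ p.1 ∧ 0 ≤ p.2 ∧ p.1 + p.2 ≤ 1} with hS
  set C : Set (ℝ × ℝ) := {p : ℝ × ℝ | p.1 + p.2 ≤ 1} with hC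
  set Q : Set (ℝ × ℝ) := Set.Icc (0:ℝ) 1 ×ˢ Set.Icc (0:ℝ) 1 with hQ
  set f : ℝ × ℝ → ℝ × ℝ := fun p => if p.1 + p.2 ≤ 1 then p else (1 - p.1, 1 - p.2)
    with hf
  set g : ℝ × ℝ → ℝ × ℝ := fun p => (1 - p.1, 1 - p.2) with hg
  have hCmeas : MeasurableSet C := measurableSet_le (measurable_fst.add measurable_snd)
    measurable_const
  have hgmeas : Measurable g :=
    (measurable_const.sub measurable_fst).prodMk (measurable_const.sub measurable_snd)
  have hfmeas : Measurable f := Measurable.ite hCmeas measurable_id hgmeas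
  -- Step 1: law of the pair
  have hpairmeas : Measurable fun ω => (U₁ ω, U₂ ω) := hU₁meas.prodMk hU₂meas
  have hpair : Measure.map (fun ω => (U₁ ω, U₂ ω)) P = volume.restrict Q := by
    rw [(indepFun_iff_map_prod_eq_prod_map_map hU₁meas.aemeasurable
      hU₂meas.aemeasurable).mp hindep, hU₁law, hU₂law, hQ,
      Measure.prod_restrict, ← Measure.volume_eq_prod ℝ ℝ]
  -- Step 2: Z = f ∘ pair
  have hZf : Z = f ∘ fun ω => (U₁ ω, U₂ ω) := by
    funext ω; simp only [hZ ω, Function.comp, hf]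
  have hmapZ : Measure.map Z P = Measure.map f (volume.restrict Q) := by
    rw [hZf, ← Measure.map_map hfmeas hpairmeas, hpair]
  rw [hmapZ]
  -- Step 3
  have hsplit : volume.restrict Q = volume.restrict (Q ∩ C) + volume.restrict (Q \ C) :=
    (Measure.restrict_inter_add_diff Q hCmeas).symm
  have hQC : Q ∩ C = S := by
    ext p
    simp only [hQ, hC, hS, Set.mem_inter_iff, Set.mem_prod, Set.mem_Icc, Set.mem_setOf_eq]
    constructor
    · rintro ⟨⟨⟨h1, h2⟩, h3, h4⟩, h5⟩; exact ⟨h1, h3, h5⟩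
    · rintro ⟨h1, h2, h3⟩; exact ⟨⟨⟨h1, by linarith⟩, h2, by linarith⟩, h3⟩
  -- first piece: f = id on S
  have hfirst : Measure.map f (volume.restrict S) = volume.restrict S := by
    have : f =ᵐ[volume.restrict S] id := by
      refine (ae_restrict_iff' ?_).2 (ae_of_all _ ?_)
      · exact (measurableSet_le measurable_const measurable_fst).inter
          ((measurableSet_le measurable_const measurable_snd).inter
            (measurableSet_le (measurable_fst.add measurable_snd) measurable_const))
      · intro p hp
        simp only [hf, hS, Set.mem_setOf_eq] at hp ⊢
        rw [if_pos hp.2.2]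
        rfl
    rw [Measure.map_congr this, Measure.map_id]
  -- second piece
  have hE : g ⁻¹' {p : ℝ × ℝ | 0 ≤ p.1 ∧ 0 ≤ p.2 ∧ p.1 + p.2 < 1} = Q \ C := by
    ext p
    simp only [hg, hQ, hC, Set.mem_preimage, Set.mem_setOf_eq, Set.mem_diff, Set.mem_prod,
      Set.mem_Icc]
    constructor
    · rintro ⟨h1, h2, h3⟩
      refine ⟨⟨⟨by linarith, by linarith⟩, by linarith, by linarith⟩, by simp; linarith⟩
    · rintro ⟨⟨⟨h1, h2⟩, h3, h4⟩, h5⟩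
      simp only [not_le] at h5
      exact ⟨by linarith, by linarith, by linarith⟩
  have hEmeas : MeasurableSet {p : ℝ × ℝ | 0 ≤ p.1 ∧ 0 ≤ p.2 ∧ p.1 + p.2 < 1} :=
    (measurableSet_le measurable_const measurable_fst).inter
      ((measurableSet_le measurable_const measurable_snd).inter
        (measurableSet_lt (measurable_fst.add measurable_snd) measurable_const))
  have hEae : {p : ℝ × ℝ | 0 ≤ p.1 ∧ 0 ≤ p.2 ∧ p.1 + p.2 < 1} =ᵐ[volume] S := by
    refine Filter.eventuallyEq_of_mem (s := {p : ℝ × ℝ | p.1 + p.2 = 1}ᶜ) ?_ ?_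
    · rw [mem_ae_iff, compl_compl]; exact line_null
    · intro p hp
      simp only [Set.mem_compl_iff, Set.mem_setOf_eq] at hp
      simp only [hS, Set.mem_setOf_eq, eq_iff_iff]
      constructor
      · rintro ⟨h1, h2, h3⟩; exact ⟨h1, h2, le_of_lt h3⟩
      · rintro ⟨h1, h2, h3⟩; exact ⟨h1, h2, lt_of_le_of_ne h3 hp⟩
  have hsecond : Measure.map f (volume.restrict (Q \ C)) = volume.restrict S := by
    have hfg : f =ᵐ[volume.restrict (Q \ C)] g := by
      refine (ae_restrict_iff' (((measurableSet_Icc).prod measurableSet_Icc).diff hCmeas)).2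
        (ae_of_all _ ?_)
      intro p hp
      simp only [hC, Set.mem_diff, Set.mem_setOf_eq] at hp
      simp only [hf, if_neg hp.2]
      rfl
    rw [Measure.map_congr hfg, ← hE, ← Measure.restrict_map hgmeas hEmeas, mp_g.map_eq,
      Measure.restrict_congr_set hEae]
  rw [hsplit, Measure.map_add _ _ hfmeas, hQC, hfirst, hsecond, two_smul]
end

section
/- Let (x₁,y₁), (x₂,y₂), (x₃,y₃) ∈ ℝ² be affinely independent, let T be the convex hull of these three points, and let Γ : ℝ² → ℝ² be the affine bijection Γ(x,y) = M^{-1}·((x,y) − (x₁,y₁)), where M is the 2×2 matrix with columns (x₂−x₁, y₂−y₁) and (x₃−x₁, y₃−y₁); thus Γ maps (x₁,y₁) to (0,0), (x₂,y₂) to (1,0), and (x₃,y₃) to (0,1), and maps T onto the standard 2-simplex S₂. Let Ŷ be a random variable whose law has density p̂(α,β) = 6(1 − α − β) 𝟙_{S₂}(α,β) with respect to Lebesgue measure. Then the random variable Γ^{-1}(Ŷ) has law with density p(x,y) = 3|T|^{-1} φ(x,y) 𝟙_T(x,y) with respect to Lebesgue measure, where φ : ℝ² → ℝ is the affine function with φ(x₁,y₁)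 = 1 and φ(x₂,y₂) = φ(x₃,y₃) = 0. -/
open MeasureTheory ProbabilityTheory ENNReal

lemma aux_map_withDensity {α β : Type*} [MeasurableSpace α] [MeasurableSpace β]
    (g : α → β) (ginv : β → α) (hg : Measurable g) (hginv : Measurable ginv)
    (hgg : ∀ x, ginv (g x) = x)
    (μ : Measure α) (f : α → ℝ≥0∞) (hf : Measurable f) :
    (μ.withDensity f).map g = (μ.map g).withDensity (fun y => f (ginv y)) := by
  ext s hs
  rw [Measure.map_apply hg hs, withDensity_apply _ (hg hs), withDensity_apply _ hs,
    setLIntegral_map hs (show Measurable fun y => f (ginv y) from hf.comp hginv) hg]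
  simp only [hgg]

lemma aux_withDensity_smul {α : Type*} [MeasurableSpace α] (c : ℝ≥0∞) (hc : c ≠ ⊤)
    (μ : Measure α) (f : α → ℝ≥0∞) :
    (c • μ).withDensity f = μ.withDensity (fun x => c * f x) := by
  ext s hs
  rw [withDensity_apply _ hs, withDensity_apply _ hs, Measure.restrict_smul,
    lintegral_smul_measure, smul_eq_mul, ← lintegral_const_mul' _ _ hc]

lemma aux_map_affine (A : (ℝ × ℝ) ≃ᵃ[ℝ] (ℝ × ℝ)) :
    Measure.map (⇑A) volume
      = ENNReal.ofReal |LinearMap.det (A.linear : (ℝ × ℝ) →ₗ[ℝ] (ℝ × ℝ))|⁻¹ • volume := by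
  have hdet : LinearMap.det (A.linear : (ℝ × ℝ) →ₗ[ℝ] (ℝ × ℝ)) ≠ 0 :=
    (LinearEquiv.isUnit_det' A.linear).ne_zero
  have hA : ⇑A = (fun y => y + A 0) ∘ ⇑(A.linear : (ℝ × ℝ) →ₗ[ℝ] (ℝ × ℝ)) := by
    funext x
    simp only [Function.comp_apply]
    calc A x = A (x +ᵥ (0 : ℝ × ℝ)) := by rw [vadd_eq_add, add_zero]
    _ = A.linear x +ᵥ A 0 := A.map_vadd _ _
    _ = _ := by rw [vadd_eq_add]; rfl
  rw [hA, ← Measure.map_map (measurable_add_const (A 0))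
    ((A.linear : (ℝ × ℝ) →ₗ[ℝ] (ℝ × ℝ)).continuous_of_finiteDimensional).measurable,
    Measure.map_linearMap_addHaar_eq_smul_addHaar volume hdet,
    Measure.map_smul, map_add_right_eq_self, abs_inv]


lemma aux_affine_eq (s : Set (ℝ × ℝ)) (hs : affineSpan ℝ s = ⊤)
    (f g : (ℝ × ℝ) →ᵃ[ℝ] ℝ) (h : ∀ x ∈ s, f x = g x) : ∀ x, f x = g x := by
  have key : ∀ (F : (ℝ × ℝ) →ᵃ[ℝ] ℝ) (c : ℝ) (u v w : ℝ × ℝ),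
      F (c • (u -ᵥ v) +ᵥ w) = c * (F u - F v) + F w := by
    intro F c u v w
    rw [AffineMap.map_vadd, F.linear.map_smul, AffineMap.linearMap_vsub]
    simp [smul_eq_mul, vsub_eq_sub, vadd_eq_add]
  let Q : AffineSubspace ℝ (ℝ × ℝ) :=
    { carrier := {x | f x = g x}
      smul_vsub_vadd_mem' := by
        intro c u v w hu hv hw
        simp only [Set.mem_setOf_eq] at hu hv hw ⊢
        rw [key, key, hu, hv, hw] }
  have hle : affineSpan ℝ s ≤ Q := affineSpan_le.mpr h
  intro x
  exact hle (hs ▸ AffineSubspace.mem_top ℝ (ℝ × ℝ) x)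


lemma aux_hull :
    convexHull ℝ ({((0:ℝ),(0:ℝ)), ((1:ℝ),(0:ℝ)), ((0:ℝ),(1:ℝ))} : Set (ℝ × ℝ))
      = {q : ℝ × ℝ | 0 ≤ q.1 ∧ 0 ≤ q.2 ∧ q.1 + q.2 ≤ 1} := by
  apply Set.Subset.antisymm
  · apply convexHull_min
    · intro q hq
      simp only [Set.mem_insert_iff, Set.mem_singleton_iff] at hq
      rcases hq with h | h | h <;> subst h <;> norm_num
    · rintro x ⟨hx1, hx2, hx3⟩ y ⟨hy1, hy2, hy3⟩ a b ha hb hab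
      refine ⟨?_, ?_, ?_⟩ <;>
        simp only [Set.mem_setOf_eq, Prod.fst_add, Prod.snd_add, Prod.smul_fst, Prod.smul_snd,
          smul_eq_mul]
      · positivity
      · positivity
      · nlinarith
  · rintro q ⟨h1, h2, h3⟩
    rw [convexHull_insert (by simp), convexHull_pair, mem_convexJoin]
    rcases eq_or_lt_of_le (by linarith : (0:ℝ) ≤ q.1 + q.2) with h0 | h0
    · have hq1 : q.1 = 0 := by linarith
      have hq2 : q.2 = 0 := by linarith
      refine ⟨(0,0), rfl, (1,0), left_mem_segment ℝ _ _, ?_⟩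
      have : q = ((0:ℝ), (0:ℝ)) := Prod.ext hq1 hq2
      rw [this]
      exact left_mem_segment ℝ _ _
    · set t := q.1 + q.2 with ht
      refine ⟨(0,0), rfl, (q.1 / t, q.2 / t), ?_, ?_⟩
      · refine ⟨q.1 / t, q.2 / t, div_nonneg h1 h0.le, div_nonneg h2 h0.le, ?_, ?_⟩
        · rw [← add_div, div_self h0.ne']
        · apply Prod.ext <;> simp [Prod.smul_fst, Prod.smul_snd, smul_eq_mul]
      · refine ⟨1 - t, t, by linarith, h0.le, by ring, ?_⟩
        apply Prod.ext <;>
          simp [Prod.smul_fst, Prod.smul_snd, smul_eq_mul, mul_div_cancel₀, h0.ne']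


lemma aux_meas : MeasurableSet {q : ℝ × ℝ | 0 ≤ q.1 ∧ 0 ≤ q.2 ∧ q.1 + q.2 ≤ 1} :=
  (measurableSet_le measurable_const measurable_fst).inter
    ((measurableSet_le measurable_const measurable_snd).inter
      (measurableSet_le (measurable_fst.add measurable_snd) measurable_const))

lemma aux_volume : volume {q : ℝ × ℝ | 0 ≤ q.1 ∧ 0 ≤ q.2 ∧ q.1 + q.2 ≤ 1}
    = ENNReal.ofReal (1/2) := by
  rw [Measure.volume_eq_prod, Measure.prod_apply aux_meas]
  have hfib : ∀ x : ℝ,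
      volume (Prod.mk x ⁻¹' {q : ℝ × ℝ | 0 ≤ q.1 ∧ 0 ≤ q.2 ∧ q.1 + q.2 ≤ 1})
        = Set.indicator (Set.Icc (0:ℝ) 1) (fun x => ENNReal.ofReal (1 - x)) x := by
    intro x
    by_cases hx : 0 ≤ x
    · have hpre : Prod.mk x ⁻¹' {q : ℝ × ℝ | 0 ≤ q.1 ∧ 0 ≤ q.2 ∧ q.1 + q.2 ≤ 1}
          = Set.Icc (0:ℝ) (1 - x) := by
        ext y
        simp only [Set.mem_preimage, Set.mem_setOf_eq, Set.mem_Icc]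
        constructor
        · rintro ⟨-, hy, hxy⟩; exact ⟨hy, by linarith⟩
        · rintro ⟨hy, hxy⟩; exact ⟨hx, hy, by linarith⟩
      rw [hpre, Real.volume_Icc]
      by_cases hx1 : x ≤ 1
      · rw [Set.indicator_of_mem (Set.mem_Icc.mpr ⟨hx, hx1⟩)]
        norm_num
      · rw [Set.indicator_of_notMem (fun h => hx1 h.2), ENNReal.ofReal_eq_zero]
        linarith
    · have hpre : Prod.mk x ⁻¹' {q : ℝ × ℝ | 0 ≤ q.1 ∧ 0 ≤ q.2 ∧ q.1 + q.2 ≤ 1} = ∅ := by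
        ext y
        simp only [Set.mem_preimage, Set.mem_setOf_eq, Set.mem_empty_iff_false, iff_false]
        rintro ⟨h, -⟩; exact hx h
      rw [hpre, measure_empty, Set.indicator_of_notMem (fun h => hx h.1)]
  simp_rw [hfib]
  rw [lintegral_indicator measurableSet_Icc _,
    ← ofReal_integral_eq_lintegral_ofReal]
  · congr 1
    rw [MeasureTheory.integral_Icc_eq_integral_Ioc,
      ← intervalIntegral.integral_of_le (zero_le_one)]
    rw [intervalIntegral.integral_sub intervalIntegrable_const
      intervalIntegral.intervalIntegrable_id, integral_id]
    norm_num
  · exact (continuous_const.sub continuous_id).integrableOn_Icc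
  · filter_upwards [ae_restrict_mem measurableSet_Icc] with x hx
    simp only [Set.mem_Icc] at hx
    simp only [Pi.zero_apply]
    linarith [hx.2]

/-- Transformation of the reference density on the standard 2-simplex to an
arbitrary nondegenerate triangle: if `Γ` is the affine bijection sending the
vertices `p₁, p₂, p₃` of `T` to `(0,0), (1,0), (0,1)` and `Yhat` has density
`6 (1 − α − β) 𝟙_{S₂}(α,β)`, then `Γ⁻¹(Yhat)` has density
`3 |T|⁻¹ φ(x) 𝟙_T(x)`, where `φ` is affine with `φ p₁ = 1`, `φ p₂ = φ p₃ = 0`. -/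
theorem stmt_12
    {Ω : Type*} [MeasurableSpace Ω] (P : Measure Ω) [IsProbabilityMeasure P]
    (p₁ p₂ p₃ : ℝ × ℝ) (hind : AffineIndependent ℝ ![p₁, p₂, p₃])
    (T : Set (ℝ × ℝ)) (hT : T = convexHull ℝ {p₁, p₂, p₃})
    (Γ : (ℝ × ℝ) ≃ᵃ[ℝ] (ℝ × ℝ))
    (hΓ₁ : Γ p₁ = (0, 0)) (hΓ₂ : Γ p₂ = (1, 0)) (hΓ₃ : Γ p₃ = (0, 1))
    (φ : (ℝ × ℝ) →ᵃ[ℝ] ℝ)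
    (hφ₁ : φ p₁ = 1) (hφ₂ : φ p₂ = 0) (hφ₃ : φ p₃ = 0)
    (S₂ : Set (ℝ × ℝ)) (hS₂ : S₂ = {q : ℝ × ℝ | 0 ≤ q.1 ∧ 0 ≤ q.2 ∧ q.1 + q.2 ≤ 1})
    (Yhat : Ω → ℝ × ℝ) (hYmeas : Measurable Yhat)
    (hYlaw : Measure.map Yhat P = volume.withDensity
      (fun q => ENNReal.ofReal (S₂.indicator (fun q => 6 * (1 - q.1 - q.2)) q))) :
    Measure.map (fun ω => Γ.symm (Yhat ω)) P
      = volume.withDensity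
          (fun x => ENNReal.ofReal
            (T.indicator (fun x => 3 * (volume T).toReal⁻¹ * φ x) x)) := by
  have hcΓ : Continuous ⇑Γ := Γ.toAffineMap.continuous_of_finiteDimensional
  have hcΓs : Continuous ⇑Γ.symm := Γ.symm.toAffineMap.continuous_of_finiteDimensional
  have hmΓ : Measurable ⇑Γ := hcΓ.measurable
  have hmΓs : Measurable ⇑Γ.symm := hcΓs.measurable
  have hS₂meas : MeasurableSet S₂ := hS₂ ▸ aux_meas
  set d : ℝ := LinearMap.det (Γ.linear : (ℝ × ℝ) →ₗ[ℝ] (ℝ × ℝ)) with hd_def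
  have hd : d ≠ 0 := (LinearEquiv.isUnit_det' Γ.linear).ne_zero
  have hdabs : (0:ℝ) < |d| := abs_pos.mpr hd
  have hdsymm : LinearMap.det (Γ.symm.linear : (ℝ × ℝ) →ₗ[ℝ] (ℝ × ℝ)) = d⁻¹ := by
    rw [AffineEquiv.linear_symm, LinearEquiv.det_coe_symm]
  -- span is everything
  have hspan : affineSpan ℝ ({p₁, p₂, p₃} : Set (ℝ × ℝ)) = ⊤ := by
    have hr : Set.range ![p₁, p₂, p₃] = {p₁, p₂, p₃} := by
      ext y
      simp [Matrix.range_cons, Matrix.range_empty]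
      tauto
    rw [← hr]
    exact hind.affineSpan_eq_top_iff_card_eq_finrank_add_one.mpr (by simp)
  -- φ is the barycentric coordinate
  have hφ : ∀ x, φ x = 1 - (Γ x).1 - (Γ x).2 := by
    set lin : (ℝ × ℝ) →ₗ[ℝ] ℝ := LinearMap.fst ℝ ℝ ℝ + LinearMap.snd ℝ ℝ ℝ with hlin
    set ψ : (ℝ × ℝ) →ᵃ[ℝ] ℝ :=
      AffineMap.const ℝ (ℝ × ℝ) (1:ℝ) - (lin.toAffineMap.comp Γ.toAffineMap) with hψdef
    have hψ : ∀ x, ψ x = 1 - ((Γ x).1 + (Γ x).2) := fun x => rfl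
    have heq := aux_affine_eq _ hspan φ ψ ?_
    · intro x
      rw [heq x, hψ x]; ring
    · intro x hx
      rcases hx with h | h | h <;> subst h <;>
        rw [hψ] <;> simp [hΓ₁, hΓ₂, hΓ₃, hφ₁, hφ₂, hφ₃]
  -- T is the preimage of S₂
  have hTpre : T = ⇑Γ ⁻¹' S₂ := by
    have himg : ⇑Γ '' T = S₂ := by
      have h1 : ⇑Γ '' T = convexHull ℝ (⇑Γ '' {p₁, p₂, p₃}) := by
        rw [hT]
        exact Γ.toAffineMap.image_convexHull _
      rw [h1, Set.image_insert_eq, Set.image_insert_eq, Set.image_singleton,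
        hΓ₁, hΓ₂, hΓ₃, aux_hull, hS₂]
    rw [← himg, Set.preimage_image_eq _ Γ.injective]
  -- volume of T
  have hvolT : volume T = ENNReal.ofReal (|d|⁻¹ * (1/2)) := by
    rw [hTpre, ← Measure.map_apply hmΓ hS₂meas, aux_map_affine Γ, Measure.smul_apply,
      smul_eq_mul, hS₂, aux_volume, ← hd_def, ← ENNReal.ofReal_mul (by positivity)]
  -- the density of Yhat is measurable
  have hfmeas : Measurable fun q : ℝ × ℝ =>
      ENNReal.ofReal (S₂.indicator (fun q => 6 * (1 - q.1 - q.2)) q) := by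
    apply Measurable.ennreal_ofReal
    exact Measurable.indicator (by fun_prop) hS₂meas
  -- main computation
  have hcomp : (fun ω => Γ.symm (Yhat ω)) = ⇑Γ.symm ∘ Yhat := rfl
  rw [hcomp, ← Measure.map_map hmΓs hYmeas, hYlaw,
    aux_map_withDensity ⇑Γ.symm ⇑Γ hmΓs hmΓ (fun x => Γ.apply_symm_apply x) volume _ hfmeas,
    aux_map_affine Γ.symm, hdsymm,
    aux_withDensity_smul _ ENNReal.ofReal_ne_top]
  congr 1
  funext x
  rw [abs_inv, inv_inv]
  by_cases hx : x ∈ T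
  · have hΓx : Γ x ∈ S₂ := by rw [hTpre] at hx; exact hx
    rw [Set.indicator_of_mem hΓx, Set.indicator_of_mem hx,
      ← ENNReal.ofReal_mul (le_of_lt hdabs)]
    congr 1
    have h2 : (volume T).toReal = |d|⁻¹ * (1/2) := by
      rw [hvolT, ENNReal.toReal_ofReal (by positivity)]
    rw [h2, show ((|d|)⁻¹ * (1/2 : ℝ))⁻¹ = 2 * |d| by field_simp, ← hφ x]
    ring
  · have hΓx : Γ x ∉ S₂ := fun h => hx (by rw [hTpre]; exact h)
    rw [Set.indicator_of_notMem hΓx, Set.indicator_of_notMem hx]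
    simp
end

section
/- Let D ⊂ ℝ² be a bounded measurable set and let T_1, …, T_N be pairwise disjoint measurable subsets of D, each of finite positive Lebesgue measure and of diameter at most h ∈ (0,1], whose union equals D up to a Lebesgue-null set. Let φ_1, …, φ_m : D → ℝ be measurable with 0 ≤ φ_j ≤ 1 and ∑_{j=1}^m φ_j ≤ 1 pointwise on D, and let A ⊆ {1,…,N} × {1,…,m} satisfy: ∫_{T_i} φ_j(x) dx = |T_i|/3 for every (i,j) ∈ A and φ_j = 0 almost everywhere on T_i for every (i,j) ∉ A. Let (Y_{i,j})_{(i,j) ∈ A} be an independent family of random variables where Y_{i,j} has law with density 3|T_i|^{-1} φ_j(x) 𝟙_{T_i}(x) with respect to Lebesgue measure. Then for every s ∈ (0,1), every f ∈ L²(D) with finite Sobolev–Slobodeckij seminorm |f|_{W^{s,2}(D)}, and all coefficients v_1, …, v_m ∈ ℝ with max_j |v_j| ≤ M, it holds with v := ∑_{j=1}^m v_j φ_j that E[|∫_D f(x) v(x) dx − (1/3) ∑_{(i,j) ∈ A} |T_i| v_j f(Y_{i,j})|²] ≤ h^{2(1+s)} M² |f|²_{W^{s,2}(D)}. -/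
set_option maxHeartbeats 1000000


open MeasureTheory ProbabilityTheory

/-- Mean-square error bound for the importance sampling estimator of the load
functional with an integrand of fractional Sobolev regularity:
`E[|∫_D f v − (1/3) ∑_{(i,j)∈A} |T i| v_j f (Y (i,j))|²]
  ≤ h^{2(1+s)} M² |f|²_{W^{s,2}(D)}` where `v = ∑ j v_j φ_j` and
`max_j |v_j| ≤ M`. -/
theorem stmt_15
    {Ω : Type*} [MeasurableSpace Ω] (P : Measure Ω) [IsProbabilityMeasure P]
    (D : Set (EuclideanSpace ℝ (Fin 2))) (hDmeas : MeasurableSet D)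
    (hDbdd : Bornology.IsBounded D)
    (h : ℝ) (hh0 : 0 < h) (hh1 : h ≤ 1)
    (N m : ℕ) (T : Fin N → Set (EuclideanSpace ℝ (Fin 2)))
    (hTmeas : ∀ i, MeasurableSet (T i))
    (hTsub : ∀ i, T i ⊆ D)
    (hTdisj : Pairwise (Function.onFun Disjoint T))
    (hTpos : ∀ i, 0 < volume (T i))
    (hTfin : ∀ i, volume (T i) < ⊤)
    (hTdiam : ∀ i, ∀ x ∈ T i, ∀ z ∈ T i, dist x z ≤ h)
    (hcover : volume (D \ ⋃ i, T i) = 0)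
    (φ : Fin m → EuclideanSpace ℝ (Fin 2) → ℝ)
    (hφmeas : ∀ j, Measurable (φ j))
    (hφnn : ∀ j, ∀ x ∈ D, 0 ≤ φ j x)
    (hφle : ∀ j, ∀ x ∈ D, φ j x ≤ 1)
    (hφsum : ∀ x ∈ D, ∑ j, φ j x ≤ 1)
    (A : Finset (Fin N × Fin m))
    (hA : ∀ p ∈ A, ∫ x in T p.1, φ p.2 x = (volume (T p.1)).toReal / 3)
    (hAc : ∀ p : Fin N × Fin m, p ∉ A →
      ∀ᵐ x ∂volume.restrict (T p.1), φ p.2 x = 0)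
    (Y : Fin N × Fin m → Ω → EuclideanSpace ℝ (Fin 2))
    (hYmeas : ∀ p, Measurable (Y p))
    (hYlaw : ∀ p ∈ A, Measure.map (Y p) P = volume.withDensity
      (fun x => ENNReal.ofReal
        ((T p.1).indicator (fun x => 3 * (volume (T p.1)).toReal⁻¹ * φ p.2 x) x)))
    (hYindep : iIndepFun
      (fun p : {p : Fin N × Fin m // p ∈ A} => Y p.1) P)
    (s : ℝ) (hs0 : 0 < s) (hs1 : s < 1)
    (f : EuclideanSpace ℝ (Fin 2) → ℝ) (hfmeas : Measurable f)
    (hf : MemLp f 2 (volume.restrict D))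
    (hsem : Integrable
      (fun p : EuclideanSpace ℝ (Fin 2) × EuclideanSpace ℝ (Fin 2) =>
        |f p.1 - f p.2| ^ 2 / dist p.1 p.2 ^ (2 + 2 * s))
      ((volume.restrict D).prod (volume.restrict D)))
    (vc : Fin m → ℝ) (M : ℝ) (hM : ∀ j, |vc j| ≤ M) :
    ∫ ω, |(∫ x in D, f x * ∑ j, vc j * φ j x)
        - (1 / 3) * ∑ p ∈ A, (volume (T p.1)).toReal * vc p.2 * f (Y p ω)| ^ 2 ∂P
      ≤ h ^ (2 * (1 + s)) * M ^ 2
          * ∫ x in D, ∫ z in D, |f x - f z| ^ 2 / dist x z ^ (2 + 2 * s) := by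
  classical
  -- notation
  set e : ℝ := 2 + 2 * s with he
  have he0 : (0:ℝ) < e := by positivity
  set K : EuclideanSpace ℝ (Fin 2) × EuclideanSpace ℝ (Fin 2) → ℝ :=
    fun q => |f q.1 - f q.2| ^ 2 / dist q.1 q.2 ^ e with hK
  have hKnn : ∀ q, 0 ≤ K q := fun q =>
    div_nonneg (by positivity) (Real.rpow_nonneg dist_nonneg _)
  have hKmeas : Measurable K := by
    apply Measurable.div
    · exact (((hfmeas.comp measurable_fst).sub (hfmeas.comp measurable_snd)).abs).pow measurable_const
    · exact (Real.continuous_rpow_const he0.le).measurable.comp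
        (measurable_fst.dist measurable_snd)
  haveI : IsFiniteMeasure (volume.restrict D) :=
    ⟨by rw [Measure.restrict_apply_univ]; exact hDbdd.measure_lt_top⟩
  have hfint : Integrable f (volume.restrict D) := hf.integrable one_le_two
  have hf2int : Integrable (fun x => f x ^ 2) (volume.restrict D) := hf.integrable_sq
  set t : Fin N → ℝ := fun i => (volume (T i)).toReal with ht_def
  have ht : ∀ i, 0 < t i := fun i => ENNReal.toReal_pos (hTpos i).ne' (hTfin i).ne
  have hTle : ∀ i, volume.restrict (T i) ≤ volume.restrict D :=
    fun i => Measure.restrict_mono (hTsub i) le_rfl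
  -- basic integrability on the cells
  have hφfT : ∀ (i : Fin N) (j : Fin m),
      Integrable (fun x => φ j x * f x) (volume.restrict (T i)) := by
    intro i j
    refine (hfint.mono_measure (hTle i)).mono
      ((hφmeas j).mul hfmeas).aestronglyMeasurable ?_
    filter_upwards [ae_restrict_mem (hTmeas i)] with x hx
    have h0 := hφnn j x (hTsub i hx)
    have h1 := hφle j x (hTsub i hx)
    simp only [Real.norm_eq_abs, abs_mul]
    calc |φ j x| * |f x| ≤ 1 * |f x| := by
          apply mul_le_mul_of_nonneg_right _ (abs_nonneg _)
          rwa [abs_of_nonneg h0]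
      _ = |f x| := one_mul _
  have hφf2T : ∀ (i : Fin N) (j : Fin m),
      Integrable (fun x => φ j x * f x ^ 2) (volume.restrict (T i)) := by
    intro i j
    refine (hf2int.mono_measure (hTle i)).mono
      ((hφmeas j).mul (hfmeas.pow measurable_const)).aestronglyMeasurable ?_
    filter_upwards [ae_restrict_mem (hTmeas i)] with x hx
    have h0 := hφnn j x (hTsub i hx)
    have h1 := hφle j x (hTsub i hx)
    simp only [Real.norm_eq_abs, abs_mul]
    calc |φ j x| * |f x ^ 2| ≤ 1 * |f x ^ 2| := by
          apply mul_le_mul_of_nonneg_right _ (abs_nonneg _)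
          rwa [abs_of_nonneg h0]
      _ = |f x ^ 2| := one_mul _
  haveI : ∀ i, IsFiniteMeasure (volume.restrict (T i)) := by
    intro i
    exact ⟨by rw [Measure.restrict_apply_univ]; exact hTfin i⟩
  have hφT : ∀ (i : Fin N) (j : Fin m),
      Integrable (φ j) (volume.restrict (T i)) := by
    intro i j
    refine (integrable_const (1:ℝ)).mono (hφmeas j).aestronglyMeasurable ?_
    filter_upwards [ae_restrict_mem (hTmeas i)] with x hx
    have h0 := hφnn j x (hTsub i hx)
    have h1 := hφle j x (hTsub i hx)
    simp only [Real.norm_eq_abs]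
    rw [abs_of_nonneg h0]
    simpa using h1
  -- moments of the sampling law
  have hindnn : ∀ p : Fin N × Fin m, ∀ x,
      0 ≤ (T p.1).indicator (fun x => 3 * (volume (T p.1)).toReal⁻¹ * φ p.2 x) x := by
    intro p x
    apply Set.indicator_nonneg
    intro y hy
    have h0 := hφnn p.2 y (hTsub p.1 hy)
    have := (ht p.1).le
    positivity
  have hindmeas : ∀ p : Fin N × Fin m,
      Measurable ((T p.1).indicator (fun x => 3 * (volume (T p.1)).toReal⁻¹ * φ p.2 x)) := by
    intro p
    exact (((hφmeas p.2).const_mul _)).indicator (hTmeas p.1)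
  have intY : ∀ p ∈ A, ∀ g : EuclideanSpace ℝ (Fin 2) → ℝ, Measurable g →
      ∫ ω, g (Y p ω) ∂P = 3 * (t p.1)⁻¹ * ∫ x in T p.1, φ p.2 x * g x := by
    intro p hp g hg
    have h1 : ∫ ω, g (Y p ω) ∂P = ∫ x, g x ∂(Measure.map (Y p) P) :=
      (integral_map (hYmeas p).aemeasurable hg.aestronglyMeasurable).symm
    rw [h1, hYlaw p hp]
    have h2 : ∫ x, g x ∂(volume.withDensity (fun x => ENNReal.ofReal
          ((T p.1).indicator (fun x => 3 * (volume (T p.1)).toReal⁻¹ * φ p.2 x) x)))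
        = ∫ x, (((T p.1).indicator
            (fun x => 3 * (volume (T p.1)).toReal⁻¹ * φ p.2 x) x).toNNReal) • g x := by
      exact integral_withDensity_eq_integral_smul
        (f := fun x => ((T p.1).indicator
          (fun x => 3 * (volume (T p.1)).toReal⁻¹ * φ p.2 x) x).toNNReal)
        (measurable_real_toNNReal.comp (hindmeas p)) g
    rw [h2]
    have h3 : ∀ x, (((T p.1).indicator
        (fun x => 3 * (volume (T p.1)).toReal⁻¹ * φ p.2 x) x).toNNReal) • g x
        = (T p.1).indicator (fun x => 3 * (volume (T p.1)).toReal⁻¹ * (φ p.2 x * g x)) x := by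
      intro x
      rw [NNReal.smul_def, smul_eq_mul, Real.coe_toNNReal _ (hindnn p x)]
      by_cases hx : x ∈ T p.1
      · rw [Set.indicator_of_mem hx, Set.indicator_of_mem hx]; ring
      · rw [Set.indicator_of_notMem hx, Set.indicator_of_notMem hx, zero_mul]
    simp only [h3]
    rw [integral_indicator (hTmeas p.1), MeasureTheory.integral_const_mul]
  have hmemY : ∀ p ∈ A, MemLp (fun ω => f (Y p ω)) 2 P := by
    intro p hp
    have hle : Measure.map (Y p) P
        ≤ (ENNReal.ofReal (3 * (t p.1)⁻¹)) • volume.restrict (T p.1) := by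
      rw [hYlaw p hp]
      have hpt : ∀ x, ENNReal.ofReal
          ((T p.1).indicator (fun x => 3 * (volume (T p.1)).toReal⁻¹ * φ p.2 x) x)
          ≤ (T p.1).indicator (fun _ => ENNReal.ofReal (3 * (t p.1)⁻¹)) x := by
        intro x
        by_cases hx : x ∈ T p.1
        · rw [Set.indicator_of_mem hx, Set.indicator_of_mem hx]
          apply ENNReal.ofReal_le_ofReal
          have h1 := hφle p.2 x (hTsub p.1 hx)
          have h0 := hφnn p.2 x (hTsub p.1 hx)
          have h2 : (0:ℝ) ≤ 3 * (t p.1)⁻¹ := by positivity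
          nlinarith
        · rw [Set.indicator_of_notMem hx, Set.indicator_of_notMem hx]
          simp
      have : (fun x => ENNReal.ofReal
          ((T p.1).indicator (fun x => 3 * (volume (T p.1)).toReal⁻¹ * φ p.2 x) x))
          ≤ᵐ[volume] (T p.1).indicator (fun _ => ENNReal.ofReal (3 * (t p.1)⁻¹)) :=
        Filter.Eventually.of_forall hpt
      calc volume.withDensity _ ≤ volume.withDensity
            ((T p.1).indicator (fun _ => ENNReal.ofReal (3 * (t p.1)⁻¹))) :=
          withDensity_mono this
        _ = (ENNReal.ofReal (3 * (t p.1)⁻¹)) • volume.restrict (T p.1) := by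
          rw [withDensity_indicator (hTmeas p.1), withDensity_const]
    have hmemmap : MemLp f 2 (Measure.map (Y p) P) :=
      (((hf.mono_measure (hTle p.1)).smul_measure ENNReal.ofReal_ne_top).mono_measure hle)
    exact (memLp_map_measure_iff hfmeas.aestronglyMeasurable.aemeasurable.aestronglyMeasurable
      (hYmeas p).aemeasurable).mp hmemmap
  -- abbreviations for cell moments
  set a1 : Fin N × Fin m → ℝ := fun p => ∫ x in T p.1, φ p.2 x * f x with ha1
  set a2 : Fin N × Fin m → ℝ := fun p => ∫ x in T p.1, φ p.2 x * f x ^ 2 with ha2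
  set X : Fin N × Fin m → Ω → ℝ :=
    fun p ω => (1 / 3 * (t p.1 * vc p.2)) * f (Y p ω) with hX_def
  have hE1 : ∀ p ∈ A, ∫ ω, f (Y p ω) ∂P = 3 * (t p.1)⁻¹ * a1 p := fun p hp =>
    intY p hp f hfmeas
  have hE2 : ∀ p ∈ A, ∫ ω, f (Y p ω) ^ 2 ∂P = 3 * (t p.1)⁻¹ * a2 p := fun p hp =>
    intY p hp (fun x => f x ^ 2) (hfmeas.pow measurable_const)
  have hXmem : ∀ p ∈ A, MemLp (X p) 2 P := fun p hp => (hmemY p hp).const_mul _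
  have hXint : ∀ p ∈ A, Integrable (X p) P := fun p hp => (hXmem p hp).integrable one_le_two
  have hEX : ∀ p ∈ A, ∫ ω, X p ω ∂P = vc p.2 * a1 p := by
    intro p hp
    have h1 : ∫ ω, X p ω ∂P = (1 / 3 * (t p.1 * vc p.2)) * ∫ ω, f (Y p ω) ∂P :=
      MeasureTheory.integral_const_mul _ _
    rw [h1, hE1 p hp]
    have htne : t p.1 ≠ 0 := (ht p.1).ne'
    field_simp
  -- the mean identity
  have hφfD : ∀ j, Integrable (fun x => φ j x * f x) (volume.restrict D) := by
    intro j
    refine hfint.mono ((hφmeas j).mul hfmeas).aestronglyMeasurable ?_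
    filter_upwards [ae_restrict_mem hDmeas] with x hx
    have h0 := hφnn j x hx
    have h1 := hφle j x hx
    simp only [Real.norm_eq_abs, abs_mul]
    calc |φ j x| * |f x| ≤ 1 * |f x| := by
          apply mul_le_mul_of_nonneg_right _ (abs_nonneg _)
          rwa [abs_of_nonneg h0]
      _ = |f x| := one_mul _
  have hUD : D =ᵐ[volume] ⋃ i, T i := by
    apply MeasureTheory.ae_eq_set.2
    constructor
    · exact hcover
    · have : (⋃ i, T i) \ D = ∅ := Set.diff_eq_empty.mpr (Set.iUnion_subset hTsub)
      rw [this]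
      exact measure_empty
  have hI : (∫ x in D, f x * ∑ j, vc j * φ j x) = ∑ p ∈ A, vc p.2 * a1 p := by
    have hpt : ∀ x, f x * ∑ j, vc j * φ j x = ∑ j, vc j * (φ j x * f x) := by
      intro x; rw [Finset.mul_sum]; apply Finset.sum_congr rfl; intros; ring
    have h1 : (∫ x in D, f x * ∑ j, vc j * φ j x)
        = ∑ j, vc j * ∫ x in D, φ j x * f x := by
      simp_rw [hpt]
      rw [integral_finset_sum _ (fun j _ => ((hφfD j).const_mul _))]
      exact Finset.sum_congr rfl fun j _ => MeasureTheory.integral_const_mul _ _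
    have h2 : ∀ j, (∫ x in D, φ j x * f x) = ∑ i, ∫ x in T i, φ j x * f x := by
      intro j
      rw [setIntegral_congr_set hUD]
      rw [MeasureTheory.integral_iUnion hTmeas hTdisj
        ((hφfD j).mono_measure (Measure.restrict_mono (Set.iUnion_subset hTsub) le_rfl))]
      exact tsum_fintype _
    have h3 : ∑ j, vc j * ∑ i, (∫ x in T i, φ j x * f x)
        = ∑ p : Fin N × Fin m, vc p.2 * a1 p := by
      rw [Fintype.sum_prod_type]
      rw [Finset.sum_comm]
      apply Finset.sum_congr rfl
      intro j _
      rw [Finset.mul_sum]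
    have h4 : ∑ p : Fin N × Fin m, vc p.2 * a1 p = ∑ p ∈ A, vc p.2 * a1 p := by
      symm
      apply Finset.sum_subset (Finset.subset_univ A)
      intro p _ hp
      have hz : a1 p = 0 := by
        have hae0 : (fun x => φ p.2 x * f x) =ᵐ[volume.restrict (T p.1)]
            (fun _ => (0:ℝ)) := by
          filter_upwards [hAc p hp] with x hx
          rw [hx, zero_mul]
        rw [ha1]
        simp only
        rw [integral_congr_ae hae0, integral_const]
        simp
      rw [hz, mul_zero]
    rw [h1]
    simp_rw [h2]
    rw [h3, h4]
  -- variance decomposition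
  have hfun : (fun ω => ∑ p ∈ A, X p ω) = ∑ p ∈ A, X p := by
    funext ω; simp [Finset.sum_apply]
  have hXsmem : MemLp (fun ω => ∑ p ∈ A, X p ω) 2 P :=
    memLp_finset_sum A (fun p hp => hXmem p hp)
  have hmean : ∫ ω, ∑ p ∈ A, X p ω ∂P = (∫ x in D, f x * ∑ j, vc j * φ j x) := by
    rw [integral_finset_sum A (fun p hp => hXint p hp), hI]
    exact Finset.sum_congr rfl hEX
  have hSrw : ∀ ω, (1 / 3 : ℝ) * ∑ p ∈ A, (volume (T p.1)).toReal * vc p.2 * f (Y p ω)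
      = ∑ p ∈ A, X p ω := by
    intro ω
    rw [Finset.mul_sum]
    apply Finset.sum_congr rfl
    intro p _
    show _ = 1 / 3 * (t p.1 * vc p.2) * f (Y p ω)
    rw [ht_def]
    ring
  have hLHSeq : ∫ ω, |(∫ x in D, f x * ∑ j, vc j * φ j x)
      - (1 / 3) * ∑ p ∈ A, (volume (T p.1)).toReal * vc p.2 * f (Y p ω)| ^ 2 ∂P
      = variance (fun ω => ∑ p ∈ A, X p ω) P := by
    rw [variance_eq_integral hXsmem.aemeasurable]
    apply integral_congr_ae
    apply Filter.Eventually.of_forall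
    intro ω
    simp only [Pi.sub_apply, Pi.pow_apply]
    rw [sq_abs, hSrw ω, hmean]
    ring
  have hpair : (↑A : Set (Fin N × Fin m)).Pairwise fun p q => IndepFun (X p) (X q) P := by
    intro p hp q hq hpq
    have h1 : IndepFun (Y p) (Y q) P := by
      have hne : (⟨p, hp⟩ : {p : Fin N × Fin m // p ∈ A}) ≠ ⟨q, hq⟩ := by
        simp only [ne_eq, Subtype.mk.injEq]
        exact hpq
      exact hYindep.indepFun hne
    exact h1.comp (hfmeas.const_mul _) (hfmeas.const_mul _)
  have hvarsum : variance (fun ω => ∑ p ∈ A, X p ω) P = ∑ p ∈ A, variance (X p) P := by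
    rw [hfun]
    exact IndepFun.variance_sum (fun p hp => hXmem p hp) hpair
  have hvarX : ∀ p ∈ A, variance (X p) P
      = vc p.2 ^ 2 * ((t p.1 / 3) * a2 p - a1 p ^ 2) := by
    intro p hp
    have h1 : variance (X p) P
        = (1 / 3 * (t p.1 * vc p.2)) ^ 2 * variance (fun ω => f (Y p ω)) P :=
      variance_const_mul _ _ _
    have h2 : variance (fun ω => f (Y p ω)) P
        = 3 * (t p.1)⁻¹ * a2 p - (3 * (t p.1)⁻¹ * a1 p) ^ 2 := by
      rw [variance_eq_sub (hmemY p hp)]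
      have e1 : P[(fun ω => f (Y p ω)) ^ 2] = ∫ ω, f (Y p ω) ^ 2 ∂P := by
        apply integral_congr_ae
        apply Filter.Eventually.of_forall
        intro ω
        simp [Pi.pow_apply]
      rw [e1, hE2 p hp, hE1 p hp]
    rw [h1, h2]
    have htne : t p.1 ≠ 0 := (ht p.1).ne'
    field_simp
  -- double-integral representation on each cell
  set W : Fin N × Fin m → ℝ := fun p => ∫ q, φ p.2 q.1 * φ p.2 q.2 * (f q.1 - f q.2) ^ 2
      ∂((volume.restrict (T p.1)).prod (volume.restrict (T p.1))) with hW_def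
  set W' : Fin N × Fin m → ℝ := fun p => ∫ q, φ p.2 q.1 * φ p.2 q.2 * K q
      ∂((volume.restrict (T p.1)).prod (volume.restrict (T p.1))) with hW'_def
  have hsem' : Integrable K ((volume.prod volume).restrict (D ×ˢ D)) := by
    rwa [← Measure.prod_restrict]
  have hK_T : ∀ i : Fin N,
      Integrable K ((volume.restrict (T i)).prod (volume.restrict (T i))) := by
    intro i
    rw [Measure.prod_restrict]
    exact hsem'.mono_measure
      (Measure.restrict_mono (Set.prod_mono (hTsub i) (hTsub i)) le_rfl)
  have hae : ∀ i : Fin N,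
      ∀ᵐ q ∂((volume.restrict (T i)).prod (volume.restrict (T i))), q ∈ T i ×ˢ T i := by
    intro i
    rw [Measure.prod_restrict]
    exact ae_restrict_mem ((hTmeas i).prod (hTmeas i))
  have hφφK_int : ∀ p : Fin N × Fin m, Integrable (fun q => φ p.2 q.1 * φ p.2 q.2 * K q)
      ((volume.restrict (T p.1)).prod (volume.restrict (T p.1))) := by
    intro p
    refine (hK_T p.1).mono
      ((((hφmeas p.2).comp measurable_fst).mul
        ((hφmeas p.2).comp measurable_snd)).mul hKmeas).aestronglyMeasurable ?_
    filter_upwards [hae p.1] with q hq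
    have h01 := hφnn p.2 q.1 (hTsub p.1 hq.1)
    have h02 := hφnn p.2 q.2 (hTsub p.1 hq.2)
    have h11 := hφle p.2 q.1 (hTsub p.1 hq.1)
    have h12 := hφle p.2 q.2 (hTsub p.1 hq.2)
    simp only [Real.norm_eq_abs, abs_mul]
    have hb : |φ p.2 q.1| * |φ p.2 q.2| ≤ 1 := by
      rw [abs_of_nonneg h01, abs_of_nonneg h02]
      nlinarith
    calc |φ p.2 q.1| * |φ p.2 q.2| * |K q| ≤ 1 * |K q| :=
          mul_le_mul_of_nonneg_right hb (abs_nonneg _)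
      _ = |K q| := one_mul _
  have hprod_int1 : ∀ p : Fin N × Fin m,
      Integrable (fun q : EuclideanSpace ℝ (Fin 2) × EuclideanSpace ℝ (Fin 2) =>
        (φ p.2 q.1 * f q.1 ^ 2) * φ p.2 q.2)
      ((volume.restrict (T p.1)).prod (volume.restrict (T p.1))) :=
    fun p => (hφf2T p.1 p.2).mul_prod (hφT p.1 p.2)
  have hprod_int2 : ∀ p : Fin N × Fin m,
      Integrable (fun q : EuclideanSpace ℝ (Fin 2) × EuclideanSpace ℝ (Fin 2) =>
        (φ p.2 q.1 * f q.1) * (φ p.2 q.2 * f q.2))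
      ((volume.restrict (T p.1)).prod (volume.restrict (T p.1))) :=
    fun p => (hφfT p.1 p.2).mul_prod (hφfT p.1 p.2)
  have hprod_int3 : ∀ p : Fin N × Fin m,
      Integrable (fun q : EuclideanSpace ℝ (Fin 2) × EuclideanSpace ℝ (Fin 2) =>
        φ p.2 q.1 * (φ p.2 q.2 * f q.2 ^ 2))
      ((volume.restrict (T p.1)).prod (volume.restrict (T p.1))) :=
    fun p => (hφT p.1 p.2).mul_prod (hφf2T p.1 p.2)
  have hWexpand : ∀ p : Fin N × Fin m,
      (fun q : EuclideanSpace ℝ (Fin 2) × EuclideanSpace ℝ (Fin 2) =>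
        φ p.2 q.1 * φ p.2 q.2 * (f q.1 - f q.2) ^ 2)
      = fun q => ((φ p.2 q.1 * f q.1 ^ 2) * φ p.2 q.2
          + φ p.2 q.1 * (φ p.2 q.2 * f q.2 ^ 2))
          - 2 * ((φ p.2 q.1 * f q.1) * (φ p.2 q.2 * f q.2)) := by
    intro p; funext q; ring
  have hWint : ∀ p : Fin N × Fin m,
      Integrable (fun q : EuclideanSpace ℝ (Fin 2) × EuclideanSpace ℝ (Fin 2) =>
        φ p.2 q.1 * φ p.2 q.2 * (f q.1 - f q.2) ^ 2)
      ((volume.restrict (T p.1)).prod (volume.restrict (T p.1))) := by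
    intro p
    rw [hWexpand p]
    exact ((hprod_int1 p).add (hprod_int3 p)).sub ((hprod_int2 p).const_mul 2)
  have hWval : ∀ p ∈ A, W p = 2 * ((t p.1 / 3) * a2 p) - 2 * a1 p ^ 2 := by
    intro p hp
    have hb : (∫ x in T p.1, φ p.2 x) = t p.1 / 3 := hA p hp
    have hIadd : Integrable (fun q : EuclideanSpace ℝ (Fin 2) × EuclideanSpace ℝ (Fin 2) =>
        (φ p.2 q.1 * f q.1 ^ 2) * φ p.2 q.2 + φ p.2 q.1 * (φ p.2 q.2 * f q.2 ^ 2))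
        ((volume.restrict (T p.1)).prod (volume.restrict (T p.1))) :=
      (hprod_int1 p).add (hprod_int3 p)
    have hImul : Integrable (fun q : EuclideanSpace ℝ (Fin 2) × EuclideanSpace ℝ (Fin 2) =>
        2 * ((φ p.2 q.1 * f q.1) * (φ p.2 q.2 * f q.2)))
        ((volume.restrict (T p.1)).prod (volume.restrict (T p.1))) :=
      (hprod_int2 p).const_mul 2
    rw [hW_def]
    simp only
    rw [hWexpand p,
      integral_sub hIadd hImul,
      integral_add (hprod_int1 p) (hprod_int3 p), MeasureTheory.integral_const_mul]
    rw [integral_prod_mul (fun x => φ p.2 x * f x ^ 2) (fun x => φ p.2 x),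
      integral_prod_mul (fun x => φ p.2 x) (fun x => φ p.2 x * f x ^ 2),
      integral_prod_mul (fun x => φ p.2 x * f x) (fun x => φ p.2 x * f x),
      hb, ha1, ha2]
    simp only
    ring
  have hVarW : ∀ p ∈ A, variance (X p) P = vc p.2 ^ 2 / 2 * W p := by
    intro p hp
    rw [hvarX p hp, hWval p hp]
    ring
  -- pointwise bound by the Sobolev kernel
  have hWle : ∀ p : Fin N × Fin m, W p ≤ h ^ e * W' p := by
    intro p
    have hpt : ∀ q : EuclideanSpace ℝ (Fin 2) × EuclideanSpace ℝ (Fin 2),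
        q.1 ∈ T p.1 → q.2 ∈ T p.1 →
        φ p.2 q.1 * φ p.2 q.2 * (f q.1 - f q.2) ^ 2
          ≤ h ^ e * (φ p.2 q.1 * φ p.2 q.2 * K q) := by
      intro q hq1 hq2
      have hφ1 := hφnn p.2 q.1 (hTsub _ hq1)
      have hφ2 := hφnn p.2 q.2 (hTsub _ hq2)
      have hd : dist q.1 q.2 ≤ h := hTdiam p.1 q.1 hq1 q.2 hq2
      by_cases h0 : dist q.1 q.2 = 0
      · have hqq : q.1 = q.2 := by rwa [dist_eq_zero] at h0
        have hz : f q.1 - f q.2 = 0 := by rw [hqq, sub_self]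
        rw [hK]
        simp only [hz]
        simp only [abs_zero, ne_eq, OfNat.ofNat_ne_zero, not_false_eq_true, zero_pow,
          zero_div, mul_zero, zero_mul]
        positivity
      · have hdp : 0 < dist q.1 q.2 := lt_of_le_of_ne dist_nonneg (Ne.symm h0)
        have hKq : (f q.1 - f q.2) ^ 2 ≤ h ^ e * K q := by
          have h1' : (f q.1 - f q.2) ^ 2 = K q * dist q.1 q.2 ^ e := by
            rw [hK]
            simp only
            rw [div_mul_cancel₀ _ (Real.rpow_pos_of_pos hdp e).ne']
            rw [sq_abs]
          rw [h1']
          have h2' : dist q.1 q.2 ^ e ≤ h ^ e :=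
            Real.rpow_le_rpow dist_nonneg hd he0.le
          calc K q * dist q.1 q.2 ^ e ≤ K q * h ^ e :=
                mul_le_mul_of_nonneg_left h2' (hKnn q)
            _ = h ^ e * K q := mul_comm _ _
        calc φ p.2 q.1 * φ p.2 q.2 * (f q.1 - f q.2) ^ 2
            ≤ φ p.2 q.1 * φ p.2 q.2 * (h ^ e * K q) :=
              mul_le_mul_of_nonneg_left hKq (by positivity)
          _ = h ^ e * (φ p.2 q.1 * φ p.2 q.2 * K q) := by ring
    have hmono := integral_mono_ae (hWint p) ((hφφK_int p).const_mul (h ^ e)) (by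
      filter_upwards [hae p.1] with q hq
      exact hpt q hq.1 hq.2)
    calc W p ≤ ∫ q, h ^ e * (φ p.2 q.1 * φ p.2 q.2 * K q)
          ∂((volume.restrict (T p.1)).prod (volume.restrict (T p.1))) := hmono
      _ = h ^ e * W' p := MeasureTheory.integral_const_mul _ _
  have hW'nonneg : ∀ p : Fin N × Fin m, 0 ≤ W' p := by
    intro p
    rw [hW'_def]
    simp only
    apply integral_nonneg_of_ae
    filter_upwards [hae p.1] with q hq
    have hφ1 := hφnn p.2 q.1 (hTsub _ hq.1)
    have hφ2 := hφnn p.2 q.2 (hTsub _ hq.2)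
    have := hKnn q
    positivity
  -- summing the cell contributions
  set J2 : ℝ := ∫ q, K q ∂((volume.restrict D).prod (volume.restrict D)) with hJ2
  have hJ2nn : 0 ≤ J2 := integral_nonneg hKnn
  have hsumW' : ∑ p ∈ A, W' p ≤ J2 := by
    have step1 : ∑ p ∈ A, W' p ≤ ∑ p : Fin N × Fin m, W' p :=
      Finset.sum_le_sum_of_subset_of_nonneg (Finset.subset_univ A)
        (fun p _ _ => hW'nonneg p)
    have step3 : ∀ i : Fin N, ∑ j, W' (i, j)
        ≤ ∫ q, K q ∂((volume.restrict (T i)).prod (volume.restrict (T i))) := by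
      intro i
      have hsum_int : ∀ j : Fin m, Integrable
          (fun q : EuclideanSpace ℝ (Fin 2) × EuclideanSpace ℝ (Fin 2) =>
            φ j q.1 * φ j q.2 * K q)
          ((volume.restrict (T i)).prod (volume.restrict (T i))) :=
        fun j => hφφK_int (i, j)
      have heq : ∑ j, W' (i, j) = ∫ q, ∑ j, φ j q.1 * φ j q.2 * K q
          ∂((volume.restrict (T i)).prod (volume.restrict (T i))) := by
        rw [integral_finset_sum _ (fun j _ => hsum_int j)]
      rw [heq]
      apply integral_mono_ae (integrable_finset_sum _ (fun j _ => hsum_int j)) (hK_T i)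
      filter_upwards [hae i] with q hq
      rw [← Finset.sum_mul]
      have hb : ∑ j, φ j q.1 * φ j q.2 ≤ 1 := by
        calc ∑ j, φ j q.1 * φ j q.2 ≤ ∑ j, φ j q.1 :=
              Finset.sum_le_sum fun j _ =>
                mul_le_of_le_one_right (hφnn j q.1 (hTsub i hq.1))
                  (hφle j q.2 (hTsub i hq.2))
          _ ≤ 1 := hφsum q.1 (hTsub i hq.1)
      calc (∑ j, φ j q.1 * φ j q.2) * K q ≤ 1 * K q :=
            mul_le_mul_of_nonneg_right hb (hKnn q)
        _ = K q := one_mul _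
    have step4 : ∑ i, (∫ q, K q ∂((volume.restrict (T i)).prod (volume.restrict (T i))))
        ≤ J2 := by
      have hrw : ∀ i : Fin N,
          (∫ q, K q ∂((volume.restrict (T i)).prod (volume.restrict (T i))))
          = ∫ q in T i ×ˢ T i, K q ∂(volume.prod volume) := by
        intro i; rw [Measure.prod_restrict]
      simp_rw [hrw]
      have hUint : IntegrableOn K (⋃ i, T i ×ˢ T i) (volume.prod volume) :=
        hsem'.mono_measure (Measure.restrict_mono (Set.iUnion_subset fun i =>
          Set.prod_mono (hTsub i) (hTsub i)) le_rfl)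
      have hdisj : Pairwise (Function.onFun Disjoint fun i : Fin N => T i ×ˢ T i) := by
        intro i i' hne
        have hd := hTdisj hne
        rw [Function.onFun] at hd ⊢
        rw [Set.disjoint_left] at hd ⊢
        rintro ⟨x, y⟩ hq hq'
        exact hd hq.1 hq'.1
      have hUn := MeasureTheory.integral_iUnion (μ := volume.prod volume)
        (fun i => (hTmeas i).prod (hTmeas i)) hdisj hUint (f := K)
      calc ∑ i, ∫ q in T i ×ˢ T i, K q ∂(volume.prod volume)
          = ∫ q in ⋃ i, T i ×ˢ T i, K q ∂(volume.prod volume) := by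
            rw [hUn, tsum_fintype]
        _ ≤ ∫ q in D ×ˢ D, K q ∂(volume.prod volume) :=
            setIntegral_mono_set hsem'
              (Filter.Eventually.of_forall fun q => hKnn q)
              ((Set.iUnion_subset fun i =>
                Set.prod_mono (hTsub i) (hTsub i)).eventuallyLE)
        _ = J2 := by rw [hJ2, Measure.prod_restrict]
    calc ∑ p ∈ A, W' p ≤ ∑ p : Fin N × Fin m, W' p := step1
      _ = ∑ i, ∑ j, W' (i, j) := by rw [Fintype.sum_prod_type]
      _ ≤ ∑ i, (∫ q, K q ∂((volume.restrict (T i)).prod (volume.restrict (T i)))) :=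
          Finset.sum_le_sum fun i _ => step3 i
      _ ≤ J2 := step4
  -- final assembly
  have hJ2eq : (∫ x in D, ∫ z in D, |f x - f z| ^ 2 / dist x z ^ e) = J2 :=
    MeasureTheory.integral_integral hsem
  rw [hLHSeq, hvarsum, hJ2eq]
  have hhe : h ^ (2 * (1 + s)) = h ^ e := by
    rw [show (2 * (1 + s) : ℝ) = e by rw [he]; ring]
  rw [hhe]
  have hstep : ∑ p ∈ A, variance (X p) P ≤ (M ^ 2 / 2 * h ^ e) * ∑ p ∈ A, W' p := by
    rw [Finset.mul_sum]
    apply Finset.sum_le_sum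
    intro p hp
    rw [hVarW p hp]
    have hM2 : vc p.2 ^ 2 ≤ M ^ 2 := by
      have := hM p.2
      nlinarith [sq_abs (vc p.2), abs_nonneg (vc p.2)]
    have hW'h : 0 ≤ h ^ e * W' p :=
      mul_nonneg (Real.rpow_pos_of_pos hh0 e).le (hW'nonneg p)
    calc vc p.2 ^ 2 / 2 * W p ≤ vc p.2 ^ 2 / 2 * (h ^ e * W' p) :=
          mul_le_mul_of_nonneg_left (hWle p) (by positivity)
      _ ≤ M ^ 2 / 2 * (h ^ e * W' p) := by nlinarith
      _ = M ^ 2 / 2 * h ^ e * W' p := by ring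
  have hW'sumnn : 0 ≤ ∑ p ∈ A, W' p := Finset.sum_nonneg fun p _ => hW'nonneg p
  have hhepos : (0:ℝ) < h ^ e := Real.rpow_pos_of_pos hh0 e
  calc ∑ p ∈ A, variance (X p) P ≤ (M ^ 2 / 2 * h ^ e) * ∑ p ∈ A, W' p := hstep
    _ ≤ (M ^ 2 / 2 * h ^ e) * J2 :=
        mul_le_mul_of_nonneg_left hsumW' (by positivity)
    _ ≤ h ^ e * M ^ 2 * J2 := by nlinarith [mul_nonneg (mul_nonneg hhepos.le (sq_nonneg M)) hJ2nn]
end
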